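/- arXiv:2001.11896 — 10 statements merged into one kernel-verified Lean document; each statement's English description precedes it below -/
import Mathlib

section
/- Let C be an n×n real symmetric positive-definite matrix and let s be an integer with 1 ≤ s ≤ n−1. Define z(C,s) := max { log det C[S,S] : S ⊆ {1,…,n}, |S| = s }. Then z(C,s) = log det C + z(C⁻¹, n−s). -/
open Matrix

/-- The maximum-entropy sampling value
`z(C,s) = max { log det C[S,S] : S ⊆ {1,…,n}, |S| = s }`. -/
noncomputable def zval (n : ℕ) (C : Matrix (Fin n) (Fin n) ℝ) (s : ℕ) : ℝ :=
  sSup {r : ℝ | ∃ S : Finset (Fin n), S.card = s ∧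
    r = Real.log (C.submatrix (fun i : {i // i ∈ S} => (i : Fin n))
          (fun i : {i // i ∈ S} => (i : Fin n))).det}

/-- positive definiteness is preserved by reindexing along an equivalence -/
lemma posDef_submatrix_equiv {m l : Type*} [Fintype m] [Fintype l] [DecidableEq m] [DecidableEq l]
    {M : Matrix m m ℝ} (hM : M.PosDef) (e : l ≃ m) : (M.submatrix e e).PosDef := by
  refine Matrix.PosDef.of_dotProduct_mulVec_pos (hM.1.submatrix e) (fun x hx => ?_)
  have hy : (x ∘ e.symm) ≠ 0 := by
    intro h
    apply hx
    funext i
    simpa using congrFun h (e i)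
  have h := hM.dotProduct_mulVec_pos hy
  convert h using 1
  rw [submatrix_mulVec_equiv]
  simp only [dotProduct, Function.comp]
  exact Fintype.sum_equiv e _ _ (fun i => by simp)

/-- the top-left block of a positive definite matrix is positive definite -/
lemma posDef_toBlocks₁₁ {m l : Type*} [Fintype m] [Fintype l] [DecidableEq m] [DecidableEq l]
    {M : Matrix (m ⊕ l) (m ⊕ l) ℝ} (hM : M.PosDef) : M.toBlocks₁₁.PosDef := by
  refine Matrix.PosDef.of_dotProduct_mulVec_pos (hM.1.submatrix Sum.inl) (fun x hx => ?_)
  have hy : (Sum.elim x 0 : m ⊕ l → ℝ) ≠ 0 := by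
    intro h
    apply hx
    funext i
    exact congrFun h (Sum.inl i)
  have h := hM.dotProduct_mulVec_pos hy
  have key : star (Sum.elim x (0 : l → ℝ)) ⬝ᵥ (M *ᵥ Sum.elim x 0)
      = star x ⬝ᵥ (M.toBlocks₁₁ *ᵥ x) := by
    conv_lhs => rw [← fromBlocks_toBlocks M]
    simp [fromBlocks_mulVec, Function.star_sumElim, sumElim_dotProduct_sumElim]
  rw [key] at h
  exact h

/-- Jacobi's determinant identity, in logarithmic form. -/
lemma key_det {n : ℕ} {C : Matrix (Fin n) (Fin n) ℝ} (hC : C.PosDef) (S : Finset (Fin n)) :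
    Real.log (C.submatrix (fun i : {i // i ∈ S} => (i : Fin n))
        (fun i : {i // i ∈ S} => (i : Fin n))).det
    = Real.log C.det +
      Real.log ((C⁻¹).submatrix (fun i : {i // i ∈ Sᶜ} => (i : Fin n))
        (fun i : {i // i ∈ Sᶜ} => (i : Fin n))).det := by
  classical
  set e : {x // x ∈ S} ⊕ {x // ¬ x ∈ S} ≃ Fin n := Equiv.sumCompl (· ∈ S) with he
  set M := C.submatrix e e with hMdef
  have hMpd : M.PosDef := posDef_submatrix_equiv hC e
  have hA : M.toBlocks₁₁ = C.submatrix (fun i : {i // i ∈ S} => (i : Fin n))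
      (fun i : {i // i ∈ S} => (i : Fin n)) := by
    ext i j
    simp [hMdef, toBlocks₁₁, he]
  have hApd : M.toBlocks₁₁.PosDef := posDef_toBlocks₁₁ hMpd
  haveI iA : Invertible M.toBlocks₁₁ := invertibleOfIsUnitDet _ hApd.det_pos.ne'.isUnit
  haveI iM : Invertible M := invertibleOfIsUnitDet _ hMpd.det_pos.ne'.isUnit
  haveI iFB : Invertible (fromBlocks M.toBlocks₁₁ M.toBlocks₁₂ M.toBlocks₂₁ M.toBlocks₂₂) :=
    iM.copy _ (fromBlocks_toBlocks M)
  haveI iS : Invertible (M.toBlocks₂₂ - M.toBlocks₂₁ * ⅟M.toBlocks₁₁ * M.toBlocks₁₂) :=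
    invertibleOfFromBlocks₁₁Invertible M.toBlocks₁₁ M.toBlocks₁₂ M.toBlocks₂₁ M.toBlocks₂₂
  set Sc := M.toBlocks₂₂ - M.toBlocks₂₁ * ⅟M.toBlocks₁₁ * M.toBlocks₁₂ with hSc
  have hdetM : M.det = C.det := det_submatrix_equiv_self e C
  have hdetSplit : M.det = M.toBlocks₁₁.det * Sc.det := by
    conv_lhs => rw [← fromBlocks_toBlocks M]
    rw [det_fromBlocks₁₁]
  -- the 2,2 block of the inverse
  have hMinv : M⁻¹ = (C⁻¹).submatrix e e := inv_submatrix_equiv C e e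
  have hinvOf : M⁻¹ = ⅟M := (invOf_eq_nonsing_inv M).symm
  have hB22 : (M⁻¹).toBlocks₂₂ = ⅟Sc := by
    have h1 : M⁻¹ = (fromBlocks M.toBlocks₁₁ M.toBlocks₁₂ M.toBlocks₂₁ M.toBlocks₂₂)⁻¹ := by
      rw [fromBlocks_toBlocks]
    rw [h1, ← invOf_eq_nonsing_inv, invOf_fromBlocks₁₁_eq, toBlocks_fromBlocks₂₂]
  let g : {i // i ∈ Sᶜ} ≃ {x // ¬ x ∈ S} :=
    Equiv.subtypeEquivRight (fun x => Finset.mem_compl)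
  have hN : (C⁻¹).submatrix (fun i : {i // i ∈ Sᶜ} => (i : Fin n))
      (fun i : {i // i ∈ Sᶜ} => (i : Fin n)) = ((M⁻¹).toBlocks₂₂).submatrix g g := by
    ext i j
    simp [hMinv, toBlocks₂₂, he, g, Equiv.subtypeEquivRight]
    rfl
  have hdetN : ((C⁻¹).submatrix (fun i : {i // i ∈ Sᶜ} => (i : Fin n))
      (fun i : {i // i ∈ Sᶜ} => (i : Fin n))).det = (Sc.det)⁻¹ := by
    rw [hN, det_submatrix_equiv_self, hB22]
    letI := detInvertibleOfInvertible Sc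
    rw [det_invOf, invOf_eq_inv]
  have hdetA : 0 < M.toBlocks₁₁.det := hApd.det_pos
  have hdetC : 0 < C.det := hC.det_pos
  have hdetSc : 0 < Sc.det := by
    have h := hdetSplit
    rw [hdetM] at h
    nlinarith
  have hAval : M.toBlocks₁₁.det = C.det * (Sc.det)⁻¹ := by
    rw [← hdetM, hdetSplit]
    field_simp
  rw [← hA, hdetN, hAval, Real.log_mul hdetC.ne' (inv_pos.mpr hdetSc).ne']

/-- For an order-n real symmetric positive-definite matrix `C`
and `1 ≤ s ≤ n-1`, one has `z(C,s) = log det C + z(C⁻¹, n - s)`. -/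
theorem stmt_1 (n : ℕ) (C : Matrix (Fin n) (Fin n) ℝ) (hC : C.PosDef)
    (s : ℕ) (hs1 : 1 ≤ s) (hs2 : s ≤ n - 1) :
    zval n C s = Real.log C.det + zval n C⁻¹ (n - s) := by
  classical
  have hsn : s ≤ n := le_trans hs2 (Nat.sub_le n 1)
  have hn1 : 1 ≤ n := le_trans hs1 hsn
  set f : Finset (Fin n) → ℝ := fun S =>
    Real.log ((C.submatrix (fun i : {i // i ∈ S} => (i : Fin n))
      (fun i : {i // i ∈ S} => (i : Fin n))).det) with hf
  set g : Finset (Fin n) → ℝ := fun S =>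
    Real.log (((C⁻¹).submatrix (fun i : {i // i ∈ S} => (i : Fin n))
      (fun i : {i // i ∈ S} => (i : Fin n))).det) with hg
  have key : ∀ S : Finset (Fin n), f S = Real.log C.det + g Sᶜ := fun S => key_det hC S
  have hzA : zval n C s = sSup (f '' {S | S.card = s}) := by
    rw [zval]
    congr 1
    ext r
    constructor
    · rintro ⟨S, h1, h2⟩; exact ⟨S, h1, h2.symm⟩
    · rintro ⟨S, h1, h2⟩; exact ⟨S, h1, h2.symm⟩
  have hzB : zval n C⁻¹ (n - s) = sSup (g '' {T | T.card = n - s}) := by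
    rw [zval]
    congr 1
    ext r
    constructor
    · rintro ⟨S, h1, h2⟩; exact ⟨S, h1, h2.symm⟩
    · rintro ⟨S, h1, h2⟩; exact ⟨S, h1, h2.symm⟩
  have himg : f '' {S | S.card = s}
      = (fun r => Real.log C.det + r) '' (g '' {T | T.card = n - s}) := by
    ext r
    constructor
    · rintro ⟨S, hS, rfl⟩
      refine ⟨g Sᶜ, ⟨Sᶜ, ?_, rfl⟩, (key S).symm⟩
      simp only [Set.mem_setOf_eq, Finset.card_compl, Fintype.card_fin]
      rw [hS]
    · rintro ⟨_, ⟨T, hT, rfl⟩, rfl⟩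
      refine ⟨Tᶜ, ?_, ?_⟩
      · simp only [Set.mem_setOf_eq, Finset.card_compl, Fintype.card_fin] at hT ⊢
        omega
      · have h := key Tᶜ
        rwa [compl_compl] at h
  have hBne : (g '' {T | T.card = n - s}).Nonempty := by
    obtain ⟨T, -, hT⟩ := Finset.exists_subset_card_eq (s := (Finset.univ : Finset (Fin n))) (n := n - s)
      (by simp)
    exact ⟨g T, ⟨T, hT, rfl⟩⟩
  have hBbdd : BddAbove (g '' {T | T.card = n - s}) :=
    ((Set.toFinite _).image g).bddAbove
  rw [hzA, hzB, himg]
  have := (OrderIso.addLeft (Real.log C.det)).map_csSup' hBne hBbdd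
  simpa using this.symm
end

section
/- Let n be a positive integer, s an integer with 1 ≤ s ≤ n, and e ∈ ℝⁿ the all-ones vector. Define the linear map Φ(x,X) := (e − x, X + eeᵀ − exᵀ − xeᵀ). Then (x,X) ∈ P(n,s) if and only if Φ(x,X) ∈ Q(n,n−s). -/
open Matrix

/-- `memP n t x X` says `(x,X) ∈ P(n,t)`: `X` is symmetric, `X - xxᵀ ⪰ 0`,
`X_{ii} = x_i`, `eᵀx = t`, and `Xe = t·x`. (`Q(n, n-s)` is `memP n (n-s)`.) -/
def memP (n : ℕ) (t : ℝ) (x : Fin n → ℝ) (X : Matrix (Fin n) (Fin n) ℝ) : Prop :=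
  X.IsSymm ∧ (X - vecMulVec x x).PosSemidef ∧ (∀ i, X i i = x i) ∧
    (∑ i, x i) = t ∧ X *ᵥ (fun _ => (1 : ℝ)) = t • x

/-- With `Φ(x,X) = (e - x, X + eeᵀ - exᵀ - xeᵀ)`, one has
`(x,X) ∈ P(n,s)` if and only if `Φ(x,X) ∈ Q(n, n-s)`. -/
theorem stmt_2 (n : ℕ) (hn : 0 < n) (s : ℕ) (hs1 : 1 ≤ s) (hs2 : s ≤ n)
    (x : Fin n → ℝ) (X : Matrix (Fin n) (Fin n) ℝ) :
    memP n (s : ℝ) x X ↔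
      memP n ((n : ℝ) - (s : ℝ)) ((fun _ => (1 : ℝ)) - x)
        (X + vecMulVec (fun _ => (1 : ℝ)) (fun _ => (1 : ℝ))
          - vecMulVec (fun _ => (1 : ℝ)) x - vecMulVec x (fun _ => (1 : ℝ))) := by
  have key : (X + vecMulVec (fun _ => (1 : ℝ)) (fun _ => (1 : ℝ))
          - vecMulVec (fun _ => (1 : ℝ)) x - vecMulVec x (fun _ => (1 : ℝ)))
        - vecMulVec ((fun _ => (1 : ℝ)) - x) ((fun _ => (1 : ℝ)) - x)
      = X - vecMulVec x x := by
    ext i j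
    simp [vecMulVec_apply, Matrix.sub_apply, Matrix.add_apply]
    ring
  constructor
  · rintro ⟨h1, h2, h3, h4, h5⟩
    have h5' : ∀ i, (∑ j, X i j) = s * x i := by
      intro i
      have := congrFun h5 i
      simpa [mulVec, dotProduct] using this
    refine ⟨?_, ?_, ?_, ?_, ?_⟩
    · ext i j
      simp [Matrix.transpose_apply, vecMulVec_apply, Matrix.sub_apply, Matrix.add_apply,
        h1.apply i j]
      ring
    · rw [key]; exact h2
    · intro i
      simp [vecMulVec_apply, Matrix.sub_apply, Matrix.add_apply, h3 i]
    · simp [Finset.sum_sub_distrib, h4]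
    · funext i
      simp [mulVec, dotProduct, Matrix.sub_apply, Matrix.add_apply, vecMulVec_apply,
        Finset.sum_sub_distrib, Finset.sum_add_distrib, h5' i, h4]
      ring
  · rintro ⟨h1, h2, h3, h4, h5⟩
    have h4' : (∑ i, x i) = s := by
      have : (∑ i, ((1 : ℝ) - x i)) = (n : ℝ) - s := by simpa using h4
      rw [Finset.sum_sub_distrib] at this
      simp at this
      linarith
    have h5' : ∀ i, (∑ j, X i j) = s * x i := by
      intro i
      have := congrFun h5 i
      simp [mulVec, dotProduct, Matrix.sub_apply, Matrix.add_apply, vecMulVec_apply,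
        Finset.sum_sub_distrib, Finset.sum_add_distrib, h4'] at this
      linarith
    refine ⟨?_, ?_, ?_, ?_, ?_⟩
    · ext i j
      have := congrFun (congrFun h1 j) i
      simp [Matrix.transpose_apply, vecMulVec_apply, Matrix.sub_apply, Matrix.add_apply] at this
      simpa [Matrix.transpose_apply] using by linarith
    · rw [← key]; exact h2
    · intro i
      have := h3 i
      simp [vecMulVec_apply, Matrix.sub_apply, Matrix.add_apply] at this ⊢
      linarith
    · exact h4'
    · funext i
      have := h5' i
      simp [mulVec, dotProduct, h4']
      linarith
end

section
/- Let C be an n×n real symmetric positive-definite matrix, let x ∈ ℝⁿ and let X be an n×n real symmetric matrix such that X − xxᵀ is positive semidefinite and X_{ii} = x_i for all i, and let γ > 0. Then the matrix γ (C ∘ X) + I − diag(x) is positive definite. -/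
open Matrix

lemma tri_comm {n : ℕ} (f : Fin n → Fin n → Fin n → ℝ) :
    ∑ i, ∑ j, ∑ k, f i j k = ∑ k, ∑ i, ∑ j, f i j k :=
  (Finset.sum_congr rfl fun _ _ => Finset.sum_comm).trans Finset.sum_comm

lemma quad_hadamard {n : ℕ} (C X : Matrix (Fin n) (Fin n) ℝ) (B : Matrix (Fin n) (Fin n) ℝ)
    (hB : X = Bᴴ * B) (v : Fin n → ℝ) :
    v ⬝ᵥ (C.hadamard X) *ᵥ v
      = ∑ k, (fun i => v i * B k i) ⬝ᵥ C *ᵥ (fun i => v i * B k i) := by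
  subst hB
  have h1 : v ⬝ᵥ (C.hadamard (Bᴴ * B)) *ᵥ v
      = ∑ i, ∑ j, ∑ k, (v i * B k i) * (C i j * (v j * B k j)) := by
    simp only [dotProduct, mulVec, hadamard_apply, Matrix.mul_apply, conjTranspose_apply,
      star_trivial, Finset.mul_sum, Finset.sum_mul]
    refine Finset.sum_congr rfl fun i _ => Finset.sum_congr rfl fun j _ =>
      Finset.sum_congr rfl fun k _ => by ring
  rw [h1, tri_comm]
  refine Finset.sum_congr rfl fun k _ => ?_
  simp only [dotProduct, mulVec, Finset.mul_sum]

lemma quad_vecMulVec {n : ℕ} (C : Matrix (Fin n) (Fin n) ℝ) (x v : Fin n → ℝ) :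
    v ⬝ᵥ (C.hadamard (vecMulVec x x)) *ᵥ v
      = (fun i => x i * v i) ⬝ᵥ C *ᵥ (fun i => x i * v i) := by
  simp only [dotProduct, mulVec, hadamard_apply, vecMulVec_apply, Finset.mul_sum]
  exact Finset.sum_congr rfl fun i _ => Finset.sum_congr rfl fun j _ => by ring

/-- If `C ≻ 0`, `X` is symmetric with `X - xxᵀ ⪰ 0` and
`X_{ii} = x_i`, and `γ > 0`, then `γ (C ∘ X) + I - diag(x)` is positive
definite. -/
theorem stmt_9 (n : ℕ) (C : Matrix (Fin n) (Fin n) ℝ) (hC : C.PosDef)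
    (x : Fin n → ℝ) (X : Matrix (Fin n) (Fin n) ℝ) (hXs : X.IsSymm)
    (hpsd : (X - vecMulVec x x).PosSemidef) (hdiag : ∀ i, X i i = x i)
    (γ : ℝ) (hγ : 0 < γ) :
    (γ • (C.hadamard X) + 1 - Matrix.diagonal x).PosDef := by
  -- diagonal bounds : 0 ≤ x i ≤ 1
  have hxb : ∀ i, 0 ≤ x i ∧ x i ≤ 1 := by
    intro i
    have h := (posSemidef_iff_dotProduct_mulVec.mp hpsd).2 (Pi.single i 1)
    simp only [star_trivial, dotProduct, mulVec, Matrix.sub_apply, vecMulVec_apply] at h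
    have h' : 0 ≤ x i - x i * x i := by
      have := h
      rw [Finset.sum_eq_single i (fun b _ hb => by simp [Pi.single_apply, hb]) (by simp)] at this
      rw [Finset.sum_eq_single i (fun b _ hb => by simp [Pi.single_apply, hb]) (by simp)] at this
      simpa [hdiag i] using this
    constructor <;> nlinarith [h']
  -- Hermitian
  have hCh := hC.1
  have herm : (γ • (C.hadamard X) + 1 - Matrix.diagonal x).IsHermitian := by
    have h : (C.hadamard X).IsHermitian := by
      unfold Matrix.IsHermitian
      ext i j
      simp only [conjTranspose_apply, hadamard_apply, star_trivial]
      rw [show C j i = C i j from by simpa using hCh.apply i j,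
        show X j i = X i j from hXs.apply i j]
    have hγsm : (γ • (C.hadamard X)).IsHermitian := by
      unfold Matrix.IsHermitian
      ext i j
      have := congrFun (congrFun h i) j
      simp only [conjTranspose_apply, Matrix.smul_apply, star_trivial] at this ⊢
      rw [this]
    exact (hγsm.add isHermitian_one).sub (isHermitian_diagonal x)
  refine posDef_iff_dotProduct_mulVec.mpr ⟨herm, fun v hv => ?_⟩
  -- quadratic form
  obtain ⟨B, hB⟩ : ∃ B : Matrix (Fin n) (Fin n) ℝ, X - vecMulVec x x = Bᴴ * B := by
    open scoped MatrixOrder in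
    exact ⟨CFC.sqrt (X - vecMulVec x x), by
      rw [(CFC.sqrt_nonneg (X - vecMulVec x x)).posSemidef.1.eq, CFC.sqrt_mul_sqrt_self _ hpsd.nonneg]⟩
  have hsplit : C.hadamard X = C.hadamard (X - vecMulVec x x) + C.hadamard (vecMulVec x x) := by
    rw [← hadamard_add, sub_add_cancel]
  have key : v ⬝ᵥ (γ • (C.hadamard X) + 1 - Matrix.diagonal x) *ᵥ v
      = γ * (v ⬝ᵥ (C.hadamard (X - vecMulVec x x)) *ᵥ v)
        + γ * ((fun i => x i * v i) ⬝ᵥ C *ᵥ (fun i => x i * v i))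
        + ∑ i, (1 - x i) * (v i)^2 := by
    rw [sub_mulVec, add_mulVec, dotProduct_sub, dotProduct_add, smul_mulVec,
      dotProduct_smul, hsplit, add_mulVec, dotProduct_add, quad_vecMulVec]
    simp only [smul_eq_mul, one_mulVec, mulVec_diagonal, dotProduct]
    rw [mul_add, add_sub_assoc]
    congr 1
    rw [← Finset.sum_sub_distrib]
    exact Finset.sum_congr rfl fun i _ => by ring
  have h1 : 0 ≤ v ⬝ᵥ (C.hadamard (X - vecMulVec x x)) *ᵥ v := by
    rw [quad_hadamard _ _ B hB v]
    refine Finset.sum_nonneg fun k _ => ?_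
    simpa using (posSemidef_iff_dotProduct_mulVec.mp hC.posSemidef).2 (fun i => v i * B k i)
  have h3 : 0 ≤ ∑ i, (1 - x i) * (v i)^2 :=
    Finset.sum_nonneg fun i _ => mul_nonneg (by linarith [(hxb i).2]) (sq_nonneg _)
  simp only [star_trivial]
  rw [key]
  by_cases hw : (fun i => x i * v i) = 0
  · -- then some v j ≠ 0 with x j = 0
    obtain ⟨j, hj⟩ := Function.ne_iff.mp hv
    have hxj : x j = 0 := by
      have := congrFun hw j
      simp only [Pi.zero_apply] at this ⊢
      rcases mul_eq_zero.mp this with h | h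
      · exact h
      · exact absurd h hj
    have hsum : 0 < ∑ i, (1 - x i) * (v i)^2 := by
      refine Finset.sum_pos' (fun i _ => mul_nonneg (by linarith [(hxb i).2]) (sq_nonneg _)) ⟨j, Finset.mem_univ j, ?_⟩
      have hj' : v j ≠ 0 := by simpa using hj
      have : (0:ℝ) < (v j)^2 := by positivity
      simpa [hxj] using this
    have h2 : 0 ≤ (fun i => x i * v i) ⬝ᵥ C *ᵥ (fun i => x i * v i) := by
      simpa using (posSemidef_iff_dotProduct_mulVec.mp hC.posSemidef).2 (fun i => x i * v i)
    nlinarith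
  · have h2 : 0 < (fun i => x i * v i) ⬝ᵥ C *ᵥ (fun i => x i * v i) := by
      simpa using (posDef_iff_dotProduct_mulVec.mp hC).2 hw
    nlinarith
end

section
/- Let C be an n×n real symmetric positive-definite matrix, let s be an integer with 1 ≤ s ≤ n, let x ∈ ℝⁿ and let X be an n×n real symmetric matrix such that X − xxᵀ is positive semidefinite and X_{ii} = x_i for all i. Then the function ψ ↦ log det( e^ψ (C ∘ X) + I − diag(x) ) − s·ψ is convex on ℝ. -/
open Matrix

section Aux

variable {m : Type*} [Fintype m] [DecidableEq m]

lemma aux_affine_convexOn (c b : ℝ) : ConvexOn ℝ Set.univ fun ψ : ℝ => c * ψ + b := by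
  refine ⟨convex_univ, fun p _ q _ a a' ha ha' hab => le_of_eq ?_⟩
  simp only [smul_eq_mul]
  linear_combination (-b) * hab

lemma aux_log_convexOn (a d : ℝ) (ha : 0 ≤ a) (hd : 0 ≤ d) (had : 0 < a + d) :
    ConvexOn ℝ Set.univ fun ψ : ℝ => Real.log (a * Real.exp ψ + d) := by
  have hpos : ∀ ψ : ℝ, 0 < a * Real.exp ψ + d := by
    intro ψ
    rcases ha.lt_or_eq with h | h
    · exact add_pos_of_pos_of_nonneg (mul_pos h (Real.exp_pos ψ)) hd
    · have hd' : 0 < d := by rw [← h, zero_add] at had; exact had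
      rw [← h, zero_mul, zero_add]; exact hd'
  have hder : ∀ ψ : ℝ, HasDerivAt (fun ψ : ℝ => Real.log (a * Real.exp ψ + d))
      (a * Real.exp ψ / (a * Real.exp ψ + d)) ψ := fun ψ =>
    ((((Real.hasDerivAt_exp ψ).const_mul a).add_const d).log (hpos ψ).ne')
  have hderiv_f : deriv (fun ψ : ℝ => Real.log (a * Real.exp ψ + d)) =
      fun ψ => a * Real.exp ψ / (a * Real.exp ψ + d) := funext fun ψ => (hder ψ).deriv
  have hder2 : ∀ ψ : ℝ, HasDerivAt (fun ψ : ℝ => a * Real.exp ψ / (a * Real.exp ψ + d))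
      ((a * Real.exp ψ * (a * Real.exp ψ + d) - a * Real.exp ψ * (a * Real.exp ψ)) /
        (a * Real.exp ψ + d) ^ 2) ψ := fun ψ =>
    (((Real.hasDerivAt_exp ψ).const_mul a).div
      (((Real.hasDerivAt_exp ψ).const_mul a).add_const d) (hpos ψ).ne')
  apply convexOn_univ_of_deriv2_nonneg
  · exact fun ψ => (hder ψ).differentiableAt
  · rw [hderiv_f]; exact fun ψ => (hder2 ψ).differentiableAt
  · intro ψ
    have h2 : deriv^[2] (fun ψ : ℝ => Real.log (a * Real.exp ψ + d)) ψ
        = deriv (deriv (fun ψ : ℝ => Real.log (a * Real.exp ψ + d))) ψ := by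
      rw [Function.iterate_succ, Function.iterate_one, Function.comp_apply]
    rw [h2, hderiv_f, (hder2 ψ).deriv]
    apply div_nonneg _ (sq_nonneg _)
    have : a * Real.exp ψ * (a * Real.exp ψ + d) - a * Real.exp ψ * (a * Real.exp ψ)
        = a * Real.exp ψ * d := by ring
    rw [this]
    exact mul_nonneg (mul_nonneg ha (Real.exp_pos ψ).le) hd

omit [DecidableEq m] in
lemma aux_vecMulVec_psd (x : m → ℝ) : (vecMulVec x x).PosSemidef := by
  refine Matrix.PosSemidef.of_dotProduct_mulVec_nonneg ?_ ?_
  · ext i j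
    simp [vecMulVec_apply, conjTranspose_apply, mul_comm]
  · intro v
    have hkey : star v ⬝ᵥ (vecMulVec x x *ᵥ v) = (x ⬝ᵥ v) ^ 2 := by
      simp only [star_trivial, dotProduct, mulVec, vecMulVec_apply, sq]
      calc ∑ i, v i * ∑ j, x i * x j * v j
          = ∑ i, (x i * v i) * ∑ j, x j * v j := by
            refine Finset.sum_congr rfl fun i _ => ?_
            rw [Finset.mul_sum, Finset.mul_sum]
            exact Finset.sum_congr rfl fun j _ => by ring
        _ = (∑ i, x i * v i) * ∑ j, x j * v j := by rw [Finset.sum_mul]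
    rw [hkey]
    exact sq_nonneg _

lemma aux_hadamard_psd {A B : Matrix m m ℝ} (hA : A.PosSemidef) (hB : B.PosSemidef) :
    (Matrix.hadamard A B).PosSemidef := by
  obtain ⟨M, rfl⟩ : ∃ M : Matrix m m ℝ, B = Mᴴ * M := by
    open scoped MatrixOrder in
    obtain ⟨M, hM⟩ := CStarAlgebra.nonneg_iff_eq_star_mul_self.mp hB.nonneg
    exact ⟨M, hM⟩
  have entry : ∀ (k i j : m),
      ((Matrix.diagonal fun i => M k i)ᴴ * A * Matrix.diagonal fun i => M k i) i j
        = M k i * A i j * M k j := by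
    intro k i j
    rw [Matrix.diagonal_conjTranspose, Matrix.mul_diagonal, Matrix.diagonal_mul]
    simp
  have key : Matrix.hadamard A (Mᴴ * M) =
      ∑ k : m, (Matrix.diagonal (fun i => M k i))ᴴ * A * Matrix.diagonal (fun i => M k i) := by
    ext i j
    rw [Matrix.sum_apply]
    simp only [entry, Matrix.hadamard_apply, Matrix.mul_apply,
      Matrix.conjTranspose_apply, star_trivial]
    rw [Finset.mul_sum]
    exact Finset.sum_congr rfl fun k _ => by ring
  rw [key]
  exact Finset.sum_induction _ _ (fun a b ha hb => ha.add hb) .zero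
    (fun k _ => hA.conjTranspose_mul_mul_same _)

lemma aux_eig_le_one {B : Matrix m m ℝ} (hB : B.PosSemidef)
    (h1B : ((1 : Matrix m m ℝ) - B).PosSemidef) (i : m) : hB.1.eigenvalues i ≤ 1 := by
  set w : m → ℝ := ⇑(hB.1.eigenvectorBasis i) with hw
  have hww : dotProduct (star w) w = 1 := by
    have h2 : (inner ℝ (hB.1.eigenvectorBasis i) (hB.1.eigenvectorBasis i) : ℝ)
        = dotProduct (star w) w := rfl
    rw [← h2, real_inner_self_eq_norm_sq, hB.1.eigenvectorBasis.orthonormal.1 i, one_pow]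
  have h := h1B.dotProduct_mulVec_nonneg w
  rw [sub_mulVec, one_mulVec, dotProduct_sub, hww, hB.1.mulVec_eigenvectorBasis i,
    dotProduct_smul] at h
  have hww' : dotProduct (star w) w = 1 := hww
  rw [smul_eq_mul, hww', mul_one] at h
  linarith

end Aux

set_option maxHeartbeats 1000000 in
/-- Under the stated hypotheses the function
`ψ ↦ log det(e^ψ (C ∘ X) + I - diag(x)) - s ψ` is convex on `ℝ`. -/
theorem stmt_10 (n : ℕ) (C : Matrix (Fin n) (Fin n) ℝ) (hC : C.PosDef)
    (s : ℕ) (hs1 : 1 ≤ s) (hs2 : s ≤ n)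
    (x : Fin n → ℝ) (X : Matrix (Fin n) (Fin n) ℝ) (hXs : X.IsSymm)
    (hpsd : (X - vecMulVec x x).PosSemidef) (hdiag : ∀ i, X i i = x i) :
    ConvexOn ℝ Set.univ (fun ψ : ℝ =>
      Real.log (Real.exp ψ • (C.hadamard X) + 1 - Matrix.diagonal x).det
        - s * ψ) := by
  classical
  set A := C.hadamard X with hAdef
  set W := vecMulVec x x with hWdef
  set Dx := Matrix.diagonal x with hDxdef
  set D := Matrix.diagonal (fun i => 1 - x i) with hDdef
  -- x i ≤ 1
  have hx1 : ∀ i, x i ≤ 1 := by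
    intro i
    have h := hpsd.dotProduct_mulVec_nonneg (Pi.single i 1)
    have hform : star (Pi.single i 1 : Fin n → ℝ) ⬝ᵥ ((X - W) *ᵥ Pi.single i 1)
        = x i - x i * x i := by
      simp [Matrix.mulVec, dotProduct, Pi.single_apply, Matrix.sub_apply, hWdef, vecMulVec_apply, hdiag]
    rw [hform] at h
    nlinarith [h]
  have hd1 : (1 : Matrix (Fin n) (Fin n) ℝ) - Dx = D := by
    rw [← Matrix.diagonal_one, hDxdef, Matrix.diagonal_sub, hDdef]
  -- basic psd facts
  have hXpsd : X.PosSemidef := by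
    have h := hpsd.add (aux_vecMulVec_psd x)
    rwa [sub_add_cancel] at h
  have hApsd : A.PosSemidef := aux_hadamard_psd hC.posSemidef hXpsd
  have hDpsd : D.PosSemidef := Matrix.PosSemidef.diagonal (fun i => by
    have := hx1 i; dsimp; linarith)
  have hDxH : Dxᴴ = Dx := by
    rw [hDxdef, Matrix.diagonal_conjTranspose]
    congr 1
  have hq2psd : (Dx * C * Dx).PosSemidef := by
    have h := hC.posSemidef.conjTranspose_mul_mul_same Dx
    rwa [hDxH] at h
  -- split A
  have hAsplit : A = C.hadamard (X - W) + Dx * C * Dx := by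
    have h1 : C.hadamard W = Dx * C * Dx := by
      ext i j
      rw [Matrix.mul_diagonal, Matrix.diagonal_mul]
      simp only [Matrix.hadamard_apply, hWdef, vecMulVec_apply]
      ring
    have h2 : A = C.hadamard ((X - W) + W) := by rw [sub_add_cancel]
    rw [h2, Matrix.hadamard_add, h1]
  -- positive definiteness of A + D
  have hS : (A + D).PosDef := by
    refine Matrix.PosDef.of_dotProduct_mulVec_pos ?_ ?_
    · exact hApsd.1.add hDpsd.1
    · intro v hv
      have hq1 : 0 ≤ star v ⬝ᵥ ((C.hadamard (X - W)) *ᵥ v) :=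
        (aux_hadamard_psd hC.posSemidef hpsd).dotProduct_mulVec_nonneg v
      have hq2 : 0 ≤ star v ⬝ᵥ ((Dx * C * Dx) *ᵥ v) := hq2psd.dotProduct_mulVec_nonneg v
      have hq3 : 0 ≤ star v ⬝ᵥ (D *ᵥ v) := hDpsd.dotProduct_mulVec_nonneg v
      have hsplitdot : star v ⬝ᵥ ((A + D) *ᵥ v)
          = (star v ⬝ᵥ ((C.hadamard (X - W)) *ᵥ v) + star v ⬝ᵥ ((Dx * C * Dx) *ᵥ v))
            + star v ⬝ᵥ (D *ᵥ v) := by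
        rw [hAsplit, Matrix.add_mulVec, Matrix.add_mulVec, dotProduct_add, dotProduct_add]
      rw [hsplitdot]
      by_cases hu : (fun i => x i * v i) = 0
      · -- some coordinate with v i ≠ 0 has x i = 0, so the D part is positive
        obtain ⟨i, hvi⟩ := Function.ne_iff.mp hv
        have hxi : x i = 0 := by
          have h := congrFun hu i
          simp only [Pi.zero_apply] at h
          rcases mul_eq_zero.mp h with h' | h'
          · exact h'
          · exact absurd h' hvi
        have hform : star v ⬝ᵥ (D *ᵥ v) = ∑ j, (1 - x j) * (v j * v j) := by
          simp only [star_trivial, dotProduct, hDdef, Matrix.mulVec_diagonal]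
          exact Finset.sum_congr rfl fun j _ => by ring
        have hq3pos : 0 < star v ⬝ᵥ (D *ᵥ v) := by
          rw [hform]
          refine Finset.sum_pos' (fun j _ => ?_) ⟨i, Finset.mem_univ i, ?_⟩
          · exact mul_nonneg (by linarith [hx1 j]) (mul_self_nonneg _)
          · rw [hxi, sub_zero, one_mul]
            exact mul_self_pos.mpr (by simpa using hvi)
        exact add_pos_of_nonneg_of_pos (add_nonneg hq1 hq2) hq3pos
      · -- the middle part is positive
        have hq2pos : 0 < star v ⬝ᵥ ((Dx * C * Dx) *ᵥ v) := by
          have hdot : ∀ w : Fin n → ℝ, v ⬝ᵥ (Dx *ᵥ w) = (fun i => x i * v i) ⬝ᵥ w := by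
            intro w
            simp only [dotProduct, hDxdef, Matrix.mulVec_diagonal]
            exact Finset.sum_congr rfl fun j _ => by ring
          have hDxv : Dx *ᵥ v = fun i => x i * v i := by
            funext i
            rw [hDxdef, Matrix.mulVec_diagonal]
          have hrw : star v ⬝ᵥ ((Dx * C * Dx) *ᵥ v)
              = star (fun i => x i * v i) ⬝ᵥ (C *ᵥ (fun i => x i * v i)) := by
            rw [star_trivial, star_trivial, ← Matrix.mulVec_mulVec, ← Matrix.mulVec_mulVec,
              hdot, hDxv]
          rw [hrw]
          exact hC.dotProduct_mulVec_pos hu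
        exact add_pos_of_pos_of_nonneg (add_pos_of_nonneg_of_pos hq1 hq2pos) hq3
  -- square root
  open scoped MatrixOrder in
  set R := CFC.sqrt (A + D) with hRdef
  open scoped MatrixOrder in
  have hRH : R.IsHermitian := (CFC.sqrt_nonneg (A + D)).posSemidef.1
  open scoped MatrixOrder in
  have hRR : R * R = A + D := CFC.sqrt_mul_sqrt_self (A + D) hS.posSemidef.nonneg
  have hdetS : 0 < (A + D).det := hS.det_pos
  have hdetR2 : R.det * R.det = (A + D).det := by rw [← Matrix.det_mul, hRR]
  have hdetR : R.det ≠ 0 := by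
    intro h
    rw [h, zero_mul] at hdetR2
    exact hdetS.ne' hdetR2.symm
  have hRunit : IsUnit R.det := isUnit_iff_ne_zero.mpr hdetR
  have hRinv1 : R * R⁻¹ = 1 := Matrix.mul_nonsing_inv R hRunit
  have hRinv2 : R⁻¹ * R = 1 := Matrix.nonsing_inv_mul R hRunit
  have hRinvH : (R⁻¹)ᴴ = R⁻¹ := hRH.inv
  -- conjugated matrix
  set B := R⁻¹ * A * R⁻¹ with hBdef
  have hBpsd : B.PosSemidef := by
    have h := hApsd.mul_mul_conjTranspose_same R⁻¹
    rwa [hRinvH] at h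
  have hconj : R⁻¹ * (A + D) * R⁻¹ = 1 := by
    rw [← hRR, Matrix.mul_assoc, Matrix.mul_assoc R R R⁻¹, hRinv1, Matrix.mul_one, hRinv2]
  have h1B_eq : (1 : Matrix (Fin n) (Fin n) ℝ) - B = R⁻¹ * D * R⁻¹ := by
    rw [← hconj, Matrix.mul_add, Matrix.add_mul, hBdef, add_sub_cancel_left]
  have h1B : ((1 : Matrix (Fin n) (Fin n) ℝ) - B).PosSemidef := by
    rw [h1B_eq]
    have h := hDpsd.mul_mul_conjTranspose_same R⁻¹
    rwa [hRinvH] at h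
  -- spectral theory of B
  have hBH : B.IsHermitian := hBpsd.1
  set μ := hBH.eigenvalues with hμdef
  set U := (Matrix.IsHermitian.eigenvectorUnitary hBH : Matrix (Fin n) (Fin n) ℝ) with hUdef
  have hμ0 : ∀ i, 0 ≤ μ i := fun i => hBpsd.eigenvalues_nonneg i
  have hμ1 : ∀ i, μ i ≤ 1 := fun i => aux_eig_le_one hBpsd h1B i
  have hU1 : U * star U = 1 :=
    Matrix.mem_unitaryGroup_iff.mp (Matrix.IsHermitian.eigenvectorUnitary hBH).2
  have hspec : B = U * Matrix.diagonal μ * star U := by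
    have h := hBH.spectral_theorem
    have h2 : (RCLike.ofReal ∘ μ : Fin n → ℝ) = μ := by
      funext i
      simp [RCLike.ofReal]
    rw [h2] at h
    exact h
  -- positivity of the diagonal factors
  have hfact : ∀ (ψ : ℝ) (i : Fin n), 0 < μ i * Real.exp ψ + (1 - μ i) := by
    intro ψ i
    rcases eq_or_lt_of_le (hμ1 i) with h | h
    · rw [h]
      simpa using Real.exp_pos ψ
    · have h1 : 0 < 1 - μ i := by linarith
      have h2 : 0 ≤ μ i * Real.exp ψ := mul_nonneg (hμ0 i) (Real.exp_pos ψ).le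
      linarith
  -- the key matrix identity
  have hψeq : ∀ ψ : ℝ, Real.exp ψ • A + 1 - Dx
      = R * (U * Matrix.diagonal (fun i => μ i * Real.exp ψ + (1 - μ i)) * star U) * R := by
    intro ψ
    have e1 : Real.exp ψ • A + 1 - Dx = Real.exp ψ • A + D := by
      rw [add_sub_assoc, hd1]
    have e2 : R * B * R = A := by
      rw [hBdef]
      calc R * (R⁻¹ * A * R⁻¹) * R = R * R⁻¹ * A * (R⁻¹ * R) := by
            simp only [Matrix.mul_assoc]
        _ = A := by rw [hRinv1, hRinv2, Matrix.one_mul, Matrix.mul_one]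
    have e3 : R * (1 - B) * R = D := by
      rw [Matrix.mul_sub, Matrix.mul_one, Matrix.sub_mul, hRR, e2, add_sub_cancel_left]
    have e5 : Real.exp ψ • Matrix.diagonal μ + ((1 : Matrix (Fin n) (Fin n) ℝ)
        - Matrix.diagonal μ) = Matrix.diagonal (fun i => μ i * Real.exp ψ + (1 - μ i)) := by
      rw [← Matrix.diagonal_one, ← Matrix.diagonal_smul, Matrix.diagonal_sub,
        Matrix.diagonal_add]
      congr 1
      funext i
      simp [mul_comm]
    have e4 : Real.exp ψ • B + (1 - B)
        = U * Matrix.diagonal (fun i => μ i * Real.exp ψ + (1 - μ i)) * star U := by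
      calc Real.exp ψ • B + (1 - B)
          = Real.exp ψ • (U * Matrix.diagonal μ * star U)
            + (U * star U - U * Matrix.diagonal μ * star U) := by rw [← hspec, hU1]
        _ = U * (Real.exp ψ • Matrix.diagonal μ
            + ((1 : Matrix (Fin n) (Fin n) ℝ) - Matrix.diagonal μ)) * star U := by
            simp only [Matrix.mul_add, Matrix.add_mul, Matrix.mul_sub, Matrix.sub_mul,
              Matrix.mul_one, Matrix.mul_smul, Matrix.smul_mul, Matrix.one_mul]
        _ = U * Matrix.diagonal (fun i => μ i * Real.exp ψ + (1 - μ i)) * star U := by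
            rw [e5]
    rw [e1, ← e4, Matrix.mul_add, Matrix.add_mul, Matrix.mul_smul, Matrix.smul_mul, e2, e3]
  -- determinant formula
  have hdet : ∀ ψ : ℝ, (Real.exp ψ • A + 1 - Dx).det
      = (A + D).det * ∏ i, (μ i * Real.exp ψ + (1 - μ i)) := by
    intro ψ
    rw [hψeq ψ]
    simp only [Matrix.det_mul, Matrix.det_diagonal]
    have hUdet : U.det * (star U).det = 1 := by
      rw [← Matrix.det_mul, hU1, Matrix.det_one]
    linear_combination (R.det * R.det * (∏ i, (μ i * Real.exp ψ + (1 - μ i)))) * hUdet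
      + (∏ i, (μ i * Real.exp ψ + (1 - μ i))) * hdetR2
  have hprodpos : ∀ ψ : ℝ, 0 < ∏ i, (μ i * Real.exp ψ + (1 - μ i)) :=
    fun ψ => Finset.prod_pos fun i _ => hfact ψ i
  -- rewrite the target function
  have hfun : (fun ψ : ℝ => Real.log (Real.exp ψ • A + 1 - Dx).det - s * ψ)
      = fun ψ : ℝ => (Real.log (A + D).det
          + ∑ i, Real.log (μ i * Real.exp ψ + (1 - μ i))) + (-(s : ℝ) * ψ + 0) := by
    funext ψ
    rw [hdet ψ, Real.log_mul hdetS.ne' (hprodpos ψ).ne',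
      Real.log_prod (fun i _ => (hfact ψ i).ne')]
    ring
  rw [hfun]
  refine ConvexOn.add (ConvexOn.add (convexOn_const _ convex_univ) ?_)
    (aux_affine_convexOn _ _)
  have hh : (fun ψ : ℝ => ∑ i, Real.log (μ i * Real.exp ψ + (1 - μ i)))
      = ∑ i : Fin n, fun ψ : ℝ => Real.log (μ i * Real.exp ψ + (1 - μ i)) := by
    funext ψ
    rw [Finset.sum_apply]
  rw [hh]
  refine Finset.sum_induction _ (ConvexOn ℝ Set.univ) (fun f g hf hg => hf.add hg)
    (by exact convexOn_const (0 : ℝ) convex_univ)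
    (fun i _ => aux_log_convexOn (μ i) (1 - μ i) (hμ0 i) (by linarith [hμ1 i]) (by linarith))
end

section
/- Let C be an n×n real symmetric positive-definite matrix, let s be an integer with 1 ≤ s ≤ n, let x ∈ ℝⁿ and let X be an n×n real symmetric matrix such that X − xxᵀ is positive semidefinite and X_{ii} = x_i for all i. Define φ(ψ) := log det F(ψ) − s·ψ with F(ψ) := e^ψ (C ∘ X) + I − diag(x). Then for every ψ ∈ ℝ, φ is differentiable at ψ with derivative φ′(ψ) = n − s − trace( F(ψ)⁻¹ (I − diag(x)) ). -/
open Matrix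

private lemma had_quad {n : ℕ} (C B : Matrix (Fin n) (Fin n) ℝ) (v : Fin n → ℝ) :
    v ⬝ᵥ (C.hadamard (Bᴴ * B) *ᵥ v) =
    ∑ k, (fun i => B k i * v i) ⬝ᵥ (C *ᵥ fun i => B k i * v i) := by
  simp only [dotProduct, mulVec, hadamard_apply, mul_apply, conjTranspose_apply,
    RCLike.star_def, Finset.mul_sum, Finset.sum_mul, starRingEnd_apply, star_trivial]
  show ∑ i, ∑ j, ∑ k, v i * (C i j * (B k i * B k j) * v j)
      = ∑ k, ∑ i, ∑ j, (B k i * v i) * (C i j * (B k j * v j))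
  rw [show (∑ i, ∑ j, ∑ k, v i * (C i j * (B k i * B k j) * v j))
      = ∑ i, ∑ k, ∑ j, v i * (C i j * (B k i * B k j) * v j) from
    Finset.sum_congr rfl fun i _ => Finset.sum_comm, Finset.sum_comm]
  exact Finset.sum_congr rfl fun k _ => Finset.sum_congr rfl fun i _ =>
    Finset.sum_congr rfl fun j _ => by ring

private lemma eval_det_one_add_X_smul {n : ℕ} (M : Matrix (Fin n) (Fin n) ℝ) (c : ℝ) :
    Polynomial.eval c (det (1 + (Polynomial.X : Polynomial ℝ) • M.map Polynomial.C))
      = det (1 + c • M) := by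
  have h := (Polynomial.evalRingHom c).map_det
    (1 + (Polynomial.X : Polynomial ℝ) • M.map Polynomial.C)
  rw [Polynomial.coe_evalRingHom] at h
  rw [h]
  congr 1
  ext i j
  by_cases hij : i = j <;>
    simp [Matrix.map_apply, Matrix.add_apply, Matrix.smul_apply, Matrix.one_apply, hij,
      smul_eq_mul] <;> ring

private lemma quad_diag {n : ℕ} {M : Matrix (Fin n) (Fin n) ℝ} (hM : M.PosSemidef)
    (i : Fin n) : 0 ≤ M i i := by
  have h := hM.dotProduct_mulVec_nonneg (Pi.single i 1)
  simpa [dotProduct, mulVec, Pi.single_apply] using h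

/-- With `F(ψ) = e^ψ (C ∘ X) + I - diag(x)` and
`φ(ψ) = log det F(ψ) - s ψ`, the function `φ` is differentiable at every
`ψ ∈ ℝ` with `φ'(ψ) = n - s - trace(F(ψ)⁻¹ (I - diag(x)))`. -/
theorem stmt_11 (n : ℕ) (C : Matrix (Fin n) (Fin n) ℝ) (hC : C.PosDef)
    (s : ℕ) (hs1 : 1 ≤ s) (hs2 : s ≤ n)
    (x : Fin n → ℝ) (X : Matrix (Fin n) (Fin n) ℝ) (hXs : X.IsSymm)
    (hpsd : (X - vecMulVec x x).PosSemidef) (hdiag : ∀ i, X i i = x i)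
    (ψ : ℝ) :
    HasDerivAt (fun t : ℝ =>
        Real.log (Real.exp t • (C.hadamard X) + 1 - Matrix.diagonal x).det
          - s * t)
      ((n : ℝ) - (s : ℝ) -
        ((Real.exp ψ • (C.hadamard X) + 1 - Matrix.diagonal x)⁻¹
          * (1 - Matrix.diagonal x)).trace) ψ := by
  classical
  set A := C.hadamard X with hA
  set D := Matrix.diagonal x with hD
  -- x x^T is PSD
  have hxx : (vecMulVec x x).PosSemidef := by
    refine posSemidef_iff_dotProduct_mulVec.mpr ⟨?_, ?_⟩
    · ext i j
      simp [vecMulVec_apply, conjTranspose_apply, mul_comm]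
    · intro v
      have hq : star v ⬝ᵥ (vecMulVec x x *ᵥ v) = (x ⬝ᵥ v) * (x ⬝ᵥ v) := by
        simp only [star_trivial, dotProduct, mulVec, vecMulVec_apply, Finset.mul_sum,
          Finset.sum_mul]
        rw [Finset.sum_comm]
        exact Finset.sum_congr rfl fun i _ => Finset.sum_congr rfl fun j _ => by ring
      rw [hq]
      exact mul_self_nonneg _
  -- X is PSD
  have hX : X.PosSemidef := by
    have h := hpsd.add hxx
    simpa using h
  -- diagonal bounds
  have hx0 : ∀ i, 0 ≤ x i := fun i => by
    have := quad_diag hX i; rwa [hdiag] at this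
  have hx1 : ∀ i, x i ≤ 1 := by
    intro i
    have h := quad_diag hpsd i
    simp only [Matrix.sub_apply, vecMulVec_apply, hdiag] at h
    nlinarith [hx0 i]
  -- decomposition X = Bᵀ B
  obtain ⟨B, hB⟩ : ∃ B : Matrix (Fin n) (Fin n) ℝ, X = Bᴴ * B := by
    open scoped MatrixOrder Matrix.Norms.L2Operator in
    exact CStarAlgebra.nonneg_iff_eq_star_mul_self.mp hX.nonneg
  -- the hadamard quadratic form
  have hHq : ∀ v : Fin n → ℝ, 0 ≤ v ⬝ᵥ (A *ᵥ v) ∧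
      (v ⬝ᵥ (A *ᵥ v) = 0 → ∀ i, v i ≠ 0 → X i i = 0) := by
    intro v
    have key : v ⬝ᵥ (A *ᵥ v)
        = ∑ k, (fun i => B k i * v i) ⬝ᵥ (C *ᵥ fun i => B k i * v i) := by
      rw [hA, hB]; exact had_quad C B v
    have hterm : ∀ k ∈ Finset.univ, 0 ≤ (fun i => B k i * v i) ⬝ᵥ (C *ᵥ fun i => B k i * v i) := by
      intro k _
      have := hC.posSemidef.dotProduct_mulVec_nonneg (fun i => B k i * v i)
      simpa using this
    constructor
    · rw [key]; exact Finset.sum_nonneg hterm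
    · intro h0 i hvi
      rw [key] at h0
      have hz : ∀ k : Fin n, (fun i => B k i * v i) = 0 := by
        intro k
        by_contra hne
        have hpos := hC.dotProduct_mulVec_pos hne
        simp only [star_trivial] at hpos
        have hk := (Finset.sum_eq_zero_iff_of_nonneg hterm).mp h0 k (Finset.mem_univ k)
        rw [hk] at hpos
        exact lt_irrefl 0 hpos
      have hBi : ∀ k, B k i = 0 := by
        intro k
        have := congrFun (hz k) i
        simp only [Pi.zero_apply] at this
        exact (mul_eq_zero.mp this).resolve_right hvi
      rw [hB]
      simp [mul_apply, conjTranspose_apply, hBi]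
  -- F(t) is positive definite
  have hFd : ∀ t : ℝ, (Real.exp t • A + (1 - D)).PosDef := by
    intro t
    refine posDef_iff_dotProduct_mulVec.mpr ⟨?_, ?_⟩
    · have hCsym : ∀ i j, C j i = C i j := fun i j => by
        conv_rhs => rw [← hC.1]
        simp [conjTranspose_apply]
      have hXsym : ∀ i j, X j i = X i j := fun i j => by
        conv_rhs => rw [← hXs]
        rfl
      ext i j
      by_cases hij : i = j <;>
        simp [conjTranspose_apply, Matrix.add_apply, Matrix.sub_apply, Matrix.smul_apply,
          hA, hD, hadamard_apply, Matrix.one_apply, Matrix.diagonal_apply, hij,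
          hCsym i j, hXsym i j, Ne.symm]
    · intro v hv
      obtain ⟨i, hvi⟩ := Function.ne_iff.mp hv
      have hsplit : star v ⬝ᵥ ((Real.exp t • A + (1 - D)) *ᵥ v)
          = Real.exp t * (v ⬝ᵥ (A *ᵥ v)) + ∑ j, (1 - x j) * (v j * v j) := by
        rw [star_trivial, add_mulVec, dotProduct_add, smul_mulVec, dotProduct_smul]
        congr 1
        have h1D : (1 : Matrix (Fin n) (Fin n) ℝ) - D = diagonal (fun j => 1 - x j) := by
          rw [hD, ← diagonal_one, diagonal_sub]
        rw [h1D]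
        simp [dotProduct, mulVec_diagonal]
        exact Finset.sum_congr rfl fun j _ => by ring
      rw [hsplit]
      have h1 : 0 ≤ v ⬝ᵥ (A *ᵥ v) := (hHq v).1
      have h2 : ∀ j ∈ Finset.univ, (0:ℝ) ≤ (1 - x j) * (v j * v j) :=
        fun j _ => mul_nonneg (by linarith [hx1 j]) (mul_self_nonneg _)
      have h2' : 0 ≤ ∑ j, (1 - x j) * (v j * v j) := Finset.sum_nonneg h2
      by_contra hcon
      push_neg at hcon
      have hq0 : v ⬝ᵥ (A *ᵥ v) = 0 := by nlinarith [Real.exp_pos t]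
      have hs0 : ∑ j, (1 - x j) * (v j * v j) = 0 := by nlinarith [Real.exp_pos t]
      have hXii : X i i = 0 := (hHq v).2 hq0 i hvi
      have hxi0 : x i = 0 := by rw [← hdiag i, hXii]
      have hterm0 := (Finset.sum_eq_zero_iff_of_nonneg h2).mp hs0 i (Finset.mem_univ i)
      rw [hxi0] at hterm0
      simp at hterm0
      exact hvi hterm0
  -- key objects
  set F := Real.exp ψ • A + (1 - D) with hF
  have hFpd : F.PosDef := hFd ψ
  have hFdet : 0 < F.det := hFpd.det_pos
  have hFunit : IsUnit F.det := isUnit_iff_ne_zero.mpr hFdet.ne'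
  set M := F⁻¹ * A with hM
  set P := det (1 + (Polynomial.X : Polynomial ℝ) • M.map Polynomial.C) with hP
  have hfact : ∀ t : ℝ, Real.exp t • A + (1 - D)
      = F * (1 + (Real.exp t - Real.exp ψ) • M) := by
    intro t
    rw [Matrix.mul_add, Matrix.mul_one, Matrix.mul_smul, hM, ← Matrix.mul_assoc,
      mul_nonsing_inv _ hFunit, Matrix.one_mul, hF]
    rw [sub_smul]
    abel
  have hdet : ∀ t : ℝ, (Real.exp t • A + (1 - D)).det
      = F.det * Polynomial.eval (Real.exp t - Real.exp ψ) P := by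
    intro t
    rw [hfact t, det_mul, hP, eval_det_one_add_X_smul]
  have h0 : HasDerivAt (fun t : ℝ => Real.exp t - Real.exp ψ) (Real.exp ψ) ψ :=
    (Real.hasDerivAt_exp ψ).sub_const _
  have hPd : HasDerivAt (fun u : ℝ => Polynomial.eval u P) (Matrix.trace M) 0 := by
    have h := Polynomial.hasDerivAt P (0:ℝ)
    rwa [hP, Matrix.derivative_det_one_add_X_smul] at h
  have hcomp : HasDerivAt (fun t : ℝ => Polynomial.eval (Real.exp t - Real.exp ψ) P)
      (Matrix.trace M * Real.exp ψ) ψ := by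
    have hPd' : HasDerivAt (fun u : ℝ => Polynomial.eval u P) (Matrix.trace M)
        (Real.exp ψ - Real.exp ψ) := by rw [sub_self]; exact hPd
    exact HasDerivAt.comp ψ hPd' h0
  have hdetDeriv : HasDerivAt (fun t : ℝ => (Real.exp t • A + (1 - D)).det)
      (F.det * (Matrix.trace M * Real.exp ψ)) ψ := by
    have heq : (fun t : ℝ => (Real.exp t • A + (1 - D)).det)
        = fun t : ℝ => F.det * Polynomial.eval (Real.exp t - Real.exp ψ) P := funext hdet
    rw [heq]
    exact hcomp.const_mul _
  have hne : (Real.exp ψ • A + (1 - D)).det ≠ 0 := by rw [← hF]; exact hFdet.ne'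
  have hlog : HasDerivAt (fun t : ℝ => Real.log ((Real.exp t • A + (1 - D)).det))
      (F.det * (Matrix.trace M * Real.exp ψ) / F.det) ψ := by
    have := hdetDeriv.log (by rw [← hF] at hne ⊢; exact hne)
    rwa [← hF] at this
  have hlin : HasDerivAt (fun t : ℝ => (s:ℝ) * t) (s:ℝ) ψ := by
    simpa using (hasDerivAt_id ψ).const_mul (s:ℝ)
  have hfull := hlog.sub hlin
  have hgoalfun : (fun t : ℝ =>
      Real.log (Real.exp t • (C.hadamard X) + 1 - Matrix.diagonal x).det - s * t)
      = fun t : ℝ => Real.log ((Real.exp t • A + (1 - D)).det) - (s:ℝ) * t := by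
    funext t
    rw [← hA, ← hD, add_sub_assoc]
  rw [hgoalfun]
  convert hfull using 1
  case e'_4 => rfl
  case e'_5 => rfl
  case e'_8 => rfl
  have hcancel : F.det * (M.trace * Real.exp ψ) / F.det = M.trace * Real.exp ψ := by
    field_simp
  rw [hcancel]
  have htr : Matrix.trace M * Real.exp ψ
      = (n:ℝ) - Matrix.trace (F⁻¹ * (1 - D)) := by
    have h2 : Real.exp ψ • A = F - (1 - D) := by rw [hF, add_sub_cancel_right]
    calc Matrix.trace M * Real.exp ψ = Matrix.trace (Real.exp ψ • M) := by
          rw [trace_smul, smul_eq_mul, mul_comm]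
      _ = Matrix.trace (F⁻¹ * (F - (1 - D))) := by
          rw [hM, ← Matrix.mul_smul, h2]
      _ = Matrix.trace (1 - F⁻¹ * (1 - D)) := by
          rw [Matrix.mul_sub, nonsing_inv_mul _ hFunit]
      _ = (n:ℝ) - Matrix.trace (F⁻¹ * (1 - D)) := by
          rw [trace_sub, trace_one]
          simp
  have hFeq : Real.exp ψ • A + 1 - D = F := by rw [hF, add_sub_assoc]
  rw [hFeq] at *
  rw [htr]
  ring
end

section
/- Let C be an n×n real symmetric positive-definite matrix, let s be an integer with 1 ≤ s ≤ n−1, and let α ∈ [0,1], γ₁ > 0, γ₂ > 0. For every S ⊆ {1,…,n} with |S| = s, letting x ∈ {0,1}ⁿ be the characteristic vector of S, X := xxᵀ, y := e − x, and Y := yyᵀ, the point (x,X,y,Y) is feasible for the mBQP relaxation (i.e., (x,X) ∈ P(n,s), (y,Y) ∈ Q(n,n−s), and x + y = e) and the mBQP objective g_{α,γ₁,γ₂}(x,X,y,Y) equals log det C[S,S]. Consequently z(C,s) ≤ v(C,s;α,γ₁,γ₂). -/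
open Matrix





/-- The mBQP objective `g_{α,γ₁,γ₂}(x,X,y,Y)`. -/
noncomputable def gobj (n : ℕ) (C : Matrix (Fin n) (Fin n) ℝ) (s : ℕ)
    (α γ₁ γ₂ : ℝ) (x : Fin n → ℝ) (X : Matrix (Fin n) (Fin n) ℝ)
    (y : Fin n → ℝ) (Y : Matrix (Fin n) (Fin n) ℝ) : ℝ :=
  (1 - α) * (Real.log (γ₁ • (C.hadamard X) + 1 - Matrix.diagonal x).det
      - s * Real.log γ₁)
  + α * (Real.log (γ₂ • ((C⁻¹).hadamard Y) + 1 - Matrix.diagonal y).det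
      - ((n : ℝ) - s) * Real.log γ₂ + Real.log C.det)

/-- The mBQP bound `v(C,s;α,γ₁,γ₂)`. -/
noncomputable def vmix (n : ℕ) (C : Matrix (Fin n) (Fin n) ℝ) (s : ℕ)
    (α γ₁ γ₂ : ℝ) : ℝ :=
  sSup {r : ℝ | ∃ x X y Y, memP n (s : ℝ) x X ∧ memP n ((n : ℝ) - s) y Y ∧
    x + y = (fun _ => (1 : ℝ)) ∧ r = gobj n C s α γ₁ γ₂ x X y Y}

section H
variable {n : ℕ}






lemma psd_quad {A : Matrix (Fin n) (Fin n) ℝ} (hA : A.PosSemidef) (v : Fin n → ℝ) :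
    0 ≤ v ⬝ᵥ A *ᵥ v := by
  have := hA.dotProduct_mulVec_nonneg v
  simpa using this

lemma psd_diag_nonneg {A : Matrix (Fin n) (Fin n) ℝ} (hA : A.PosSemidef) (i : Fin n) :
    0 ≤ A i i := by
  have := psd_quad hA (Pi.single i 1)
  simpa [Matrix.mulVec_single, single_dotProduct] using this

lemma psd_symm_apply {A : Matrix (Fin n) (Fin n) ℝ} (hA : A.PosSemidef) (i j : Fin n) :
    A j i = A i j := by
  have h := hA.1
  have := congrFun (congrFun h i) j
  simpa [Matrix.conjTranspose_apply] using this

lemma psd_entry_abs_le {A : Matrix (Fin n) (Fin n) ℝ} (hA : A.PosSemidef) (i j : Fin n) :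
    |A i j| ≤ (A i i + A j j) / 2 := by
  rcases eq_or_ne i j with rfl | hij
  · rw [abs_of_nonneg (psd_diag_nonneg hA i)]; linarith
  · have h1 := psd_quad hA (Pi.single i 1 + Pi.single j 1)
    have h2 := psd_quad hA (Pi.single i 1 - Pi.single j 1)
    have hs := psd_symm_apply hA i j
    simp only [Matrix.mulVec_add, Matrix.mulVec_sub, dotProduct_add,
      dotProduct_sub, add_dotProduct, sub_dotProduct,
      Matrix.mulVec_single, single_dotProduct, mul_one, one_mul,
      MulOpposite.op_one, one_smul, Matrix.col_apply] at h1 h2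
    rw [abs_le]
    constructor <;> nlinarith

lemma psd_vecMulVec (v : Fin n → ℝ) : (vecMulVec v v).PosSemidef := by
  refine Matrix.PosSemidef.of_dotProduct_mulVec_nonneg ?_ ?_
  · ext i j
    simp [Matrix.conjTranspose_apply, Matrix.vecMulVec_apply, mul_comm]
  · intro u
    have hmv : vecMulVec v v *ᵥ u = (v ⬝ᵥ u) • v := by
      funext i
      simp only [Matrix.mulVec, Matrix.vecMulVec_apply, dotProduct, Pi.smul_apply,
        smul_eq_mul, Finset.sum_mul]
      exact Finset.sum_congr rfl fun k _ => by ring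
    rw [hmv]
    simp only [star_trivial]
    rw [dotProduct_smul]
    have : u ⬝ᵥ v = v ⬝ᵥ u := dotProduct_comm u v
    simp only [smul_eq_mul, this]
    exact mul_self_nonneg _








lemma det_abs_le {M : Matrix (Fin n) (Fin n) ℝ} {B : ℝ}
    (h : ∀ i j, |M i j| ≤ B) : |M.det| ≤ (n.factorial : ℝ) * B ^ n := by
  rw [Matrix.det_apply]
  calc |∑ σ : Equiv.Perm (Fin n), Equiv.Perm.sign σ • ∏ i, M (σ i) i|
      ≤ ∑ σ : Equiv.Perm (Fin n), |Equiv.Perm.sign σ • ∏ i, M (σ i) i| :=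
        Finset.abs_sum_le_sum_abs _ _
    _ ≤ ∑ _σ : Equiv.Perm (Fin n), B ^ n := by
        apply Finset.sum_le_sum
        intro σ _
        have h1 : |Equiv.Perm.sign σ • ∏ i, M (σ i) i| = |∏ i, M (σ i) i| := by
          rcases Int.units_eq_one_or (Equiv.Perm.sign σ) with hσ | hσ <;>
            simp [hσ, abs_neg]
        rw [h1]
        calc |∏ i, M (σ i) i| = ∏ i, |M (σ i) i| := Finset.abs_prod _ _
          _ ≤ ∏ _i : Fin n, B := Finset.prod_le_prod (fun _ _ => abs_nonneg _)
              (fun i _ => h (σ i) i)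
          _ = B ^ n := by simp [Finset.prod_const]
    _ = (n.factorial : ℝ) * B ^ n := by
        rw [Finset.sum_const, Finset.card_univ, Fintype.card_perm, Fintype.card_fin,
          nsmul_eq_mul]

lemma logdet_le {M : Matrix (Fin n) (Fin n) ℝ} {B : ℝ} (hB : 1 ≤ B)
    (h : ∀ i j, |M i j| ≤ B) :
    Real.log M.det ≤ Real.log ((n.factorial : ℝ) * B ^ n) := by
  have hd : |M.det| ≤ (n.factorial : ℝ) * B ^ n := det_abs_le h
  have hR : (1:ℝ) ≤ (n.factorial : ℝ) * B ^ n := by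
    have h1 : (1:ℝ) ≤ (n.factorial : ℝ) := by exact_mod_cast n.factorial_pos
    have h2 : (1:ℝ) ≤ B ^ n := one_le_pow₀ hB
    nlinarith
  rw [← Real.log_abs]
  rcases eq_or_lt_of_le (abs_nonneg M.det) with h0 | h0
  · rw [← h0, Real.log_zero]
    exact Real.log_nonneg hR
  · exact Real.log_le_log h0 hd








lemma sum_ext_subtype (S : Finset (Fin n)) (v : {i // i ∈ S} → ℝ) (f : Fin n → ℝ) :
    ∑ i, (if h : i ∈ S then v ⟨i, h⟩ else 0) * f i = ∑ i : {i // i ∈ S}, v i * f ↑i := by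
  classical
  rw [← Finset.sum_subset S.subset_univ (by intro x _ hx; rw [dif_neg hx, zero_mul])]
  rw [← Finset.sum_coe_sort S (fun i => (if h : i ∈ S then v ⟨i, h⟩ else 0) * f i)]
  refine Finset.sum_congr rfl fun i _ => ?_
  rw [dif_pos i.2]

lemma posDef_submatrix {M : Matrix (Fin n) (Fin n) ℝ} (hM : M.PosDef) (S : Finset (Fin n)) :
    (M.submatrix (fun i : {i // i ∈ S} => (i : Fin n))
      (fun i : {i // i ∈ S} => (i : Fin n))).PosDef := by
  classical
  refine Matrix.PosDef.of_dotProduct_mulVec_pos ?_ ?_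
  · have h := hM.1
    ext i j
    have := congrFun (congrFun h (i : Fin n)) (j : Fin n)
    simpa [Matrix.conjTranspose_apply, Matrix.submatrix_apply] using this
  · intro v hv
    set w : Fin n → ℝ := fun i => if h : i ∈ S then v ⟨i, h⟩ else 0 with hw
    have hwne : w ≠ 0 := by
      obtain ⟨k, hk⟩ := Function.ne_iff.mp hv
      intro h0
      apply hk
      have := congrFun h0 (k : Fin n)
      simpa [hw, dif_pos k.2] using this
    have hquad := hM.dotProduct_mulVec_pos hwne
    have hmv : ∀ i : Fin n, (M *ᵥ w) i = ∑ j : {i // i ∈ S}, v j * M i ↑j := by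
      intro i
      show ∑ j, M i j * w j = _
      calc ∑ j, M i j * w j = ∑ j, w j * M i j := by
            exact Finset.sum_congr rfl fun j _ => mul_comm _ _
        _ = ∑ j : {i // i ∈ S}, v j * M i ↑j := sum_ext_subtype S v (fun j => M i j)
    have key : w ⬝ᵥ M *ᵥ w = v ⬝ᵥ (M.submatrix (fun i : {i // i ∈ S} => (i : Fin n))
        (fun i : {i // i ∈ S} => (i : Fin n))) *ᵥ v := by
      show ∑ i, w i * (M *ᵥ w) i = ∑ i : {i // i ∈ S}, v i * _
      rw [sum_ext_subtype S v (fun i => (M *ᵥ w) i)]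
      refine Finset.sum_congr rfl fun i _ => ?_
      rw [hmv]
      congr 1
      show _ = ∑ j : {i // i ∈ S}, M ↑i ↑j * v j
      exact Finset.sum_congr rfl fun j _ => mul_comm _ _
    simpa [key] using hquad








lemma det_mul_block (p : Fin n → Prop) [DecidablePred p]
    (M A : Matrix (Fin n) (Fin n) ℝ) (γ : ℝ)
    (h1 : ∀ i j, p i → p j → M i j = γ * A i j)
    (h2 : ∀ i j, p i → ¬p j → M i j = 0)
    (h4 : ∀ i j, ¬p i → ¬p j → M i j = if i = j then 1 else 0) :
    M.det = γ ^ (Fintype.card {a // p a}) *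
      (A.submatrix (fun i : {a // p a} => (i : Fin n)) (fun i : {a // p a} => (i : Fin n))).det := by
  classical
  rw [Matrix.twoBlockTriangular_det' M p (fun i hi j hj => h2 i j hi hj)]
  have hb1 : Matrix.toSquareBlockProp M p
      = γ • (A.submatrix (fun i : {a // p a} => (i : Fin n)) (fun i : {a // p a} => (i : Fin n))) := by
    ext i j
    show M ↑i ↑j = _
    simp only [Matrix.smul_apply, Matrix.submatrix_apply, smul_eq_mul]
    exact h1 ↑i ↑j i.2 j.2
  have hb2 : Matrix.toSquareBlockProp M (fun i => ¬ p i) = 1 := by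
    ext i j
    show M ↑i ↑j = _
    rw [h4 ↑i ↑j i.2 j.2, Matrix.one_apply]
    simp [Subtype.ext_iff]
  rw [hb1, hb2, Matrix.det_one, mul_one, Matrix.det_smul]

lemma jacobi {C : Matrix (Fin n) (Fin n) ℝ} (hC : C.PosDef) (S : Finset (Fin n)) :
    C.det * ((C⁻¹).submatrix (fun i : {i // ¬ i ∈ S} => (i : Fin n))
        (fun i : {i // ¬ i ∈ S} => (i : Fin n))).det
      = (C.submatrix (fun i : {i // i ∈ S} => (i : Fin n))
        (fun i : {i // i ∈ S} => (i : Fin n))).det := by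
  classical
  set N : Matrix (Fin n) (Fin n) ℝ :=
    Matrix.of fun i j => if j ∈ S then (if i = j then (1:ℝ) else 0) else C⁻¹ i j with hN
  have hdetN : N.det = ((C⁻¹).submatrix (fun i : {i // ¬ i ∈ S} => (i : Fin n))
      (fun i : {i // ¬ i ∈ S} => (i : Fin n))).det := by
    have := det_mul_block (fun i => ¬ i ∈ S) N C⁻¹ 1
      (fun i j hi hj => by simp [hN, hj])
      (fun i j hi hj => by
        have hij : i ≠ j := fun h => hi (h ▸ (not_not.mp hj))
        simp [hN, not_not.mp hj, hij])
      (fun i j hi hj => by simp [hN, not_not.mp hj])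
    rw [one_pow, one_mul] at this
    rw [this]
  have hCN : C * N = Matrix.of fun i j => if j ∈ S then C i j else if i = j then (1:ℝ) else 0 := by
    ext i j
    rw [Matrix.mul_apply]
    by_cases hj : j ∈ S
    · simp [hN, hj, mul_ite]
    · have hinv : (C * C⁻¹) i j = (1 : Matrix (Fin n) (Fin n) ℝ) i j := by
        rw [Matrix.mul_nonsing_inv C (isUnit_iff_ne_zero.mpr hC.det_pos.ne')]
      rw [Matrix.mul_apply] at hinv
      simp only [hN, Matrix.of_apply, if_neg hj]
      rw [hinv, Matrix.one_apply]
  have hdetCN : (C * N).det = (C.submatrix (fun i : {i // i ∈ S} => (i : Fin n))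
      (fun i : {i // i ∈ S} => (i : Fin n))).det := by
    have := det_mul_block (fun i => i ∈ S) (C * N) C 1
      (fun i j hi hj => by simp [hCN, hj])
      (fun i j hi hj => by
        have hij : i ≠ j := fun h => hj (h ▸ hi)
        simp [hCN, hj, hij])
      (fun i j hi hj => by simp [hCN, hj])
    rw [one_pow, one_mul] at this
    rw [this]
    congr!
  rw [← hdetCN, Matrix.det_mul, hdetN]



lemma card_subtype_mem (S : Finset (Fin n)) (inst : Fintype {a // a ∈ S}) :
    @Fintype.card {a // a ∈ S} inst = S.card :=
  @Fintype.card_of_subtype (Fin n) (fun a => a ∈ S) S (fun _ => Iff.rfl) inst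

lemma card_subtype_not_mem (S : Finset (Fin n)) (inst : Fintype {a // ¬ a ∈ S}) :
    @Fintype.card {a // ¬ a ∈ S} inst = n - S.card := by
  rw [@Fintype.card_subtype_compl (Fin n) _ (fun a => a ∈ S) _ inst, Fintype.card_fin,
    card_subtype_mem S _]

lemma det_gamma_block (p : Fin n → Prop) [DecidablePred p]
    (A : Matrix (Fin n) (Fin n) ℝ) (γ : ℝ) (x : Fin n → ℝ)
    (hx : ∀ i, x i = if p i then 1 else 0) (k : ℕ)
    (hk : Fintype.card {a // p a} = k) :
    (γ • (A.hadamard (vecMulVec x x)) + 1 - Matrix.diagonal x).det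
      = γ ^ k *
        (A.submatrix (fun i : {a // p a} => (i : Fin n)) (fun i : {a // p a} => (i : Fin n))).det := by
  classical
  rw [← hk]
  have hentry : ∀ i j, (γ • (A.hadamard (vecMulVec x x)) + 1 - Matrix.diagonal x) i j
      = γ * (A i j * (x i * x j)) + (if i = j then (1:ℝ) else 0) - (if i = j then x i else 0) := by
    intro i j
    simp [Matrix.sub_apply, Matrix.add_apply, Matrix.smul_apply, Matrix.hadamard_apply,
      Matrix.vecMulVec_apply, Matrix.one_apply, Matrix.diagonal_apply, smul_eq_mul]
  apply det_mul_block p _ A γ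
  · intro i j hi hj
    rw [hentry i j, hx i, hx j, if_pos hi, if_pos hj]
    by_cases hij : i = j <;> simp [hij] <;> ring
  · intro i j hi hj
    have hij : i ≠ j := fun h => hj (h ▸ hi)
    rw [hentry i j, hx i, hx j, if_pos hi, if_neg hj]
    simp [hij]
  · intro i j hi hj
    rw [hentry i j, hx i, if_neg hi]
    by_cases hij : i = j <;> simp [hij]

end H
section H2
variable {n : ℕ}

lemma gobj_eq {C : Matrix (Fin n) (Fin n) ℝ} (hC : C.PosDef) {s : ℕ} (hsn : s ≤ n)
    (α γ₁ γ₂ : ℝ) (hγ₁ : 0 < γ₁) (hγ₂ : 0 < γ₂) (S : Finset (Fin n)) (hS : S.card = s)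
    (x y : Fin n → ℝ) (hx : x = (fun i => if i ∈ S then (1 : ℝ) else 0))
    (hy : y = (fun _ => (1 : ℝ)) - x) :
    gobj n C s α γ₁ γ₂ x (vecMulVec x x) y (vecMulVec y y)
      = Real.log (C.submatrix (fun i : {i // i ∈ S} => (i : Fin n))
          (fun i : {i // i ∈ S} => (i : Fin n))).det := by
  set dS := (C.submatrix (fun i : {i // i ∈ S} => (i : Fin n))
          (fun i : {i // i ∈ S} => (i : Fin n))).det with hdS
  set dT := ((C⁻¹).submatrix (fun i : {i // ¬ i ∈ S} => (i : Fin n))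
          (fun i : {i // ¬ i ∈ S} => (i : Fin n))).det with hdT
  have hdSpos : 0 < dS := (posDef_submatrix hC S).det_pos
  have hdetC : 0 < C.det := hC.det_pos
  have hjac : C.det * dT = dS := jacobi hC S
  have hdTpos : 0 < dT := by
    by_contra h
    push_neg at h
    nlinarith
  have hx' : ∀ i, x i = if i ∈ S then (1:ℝ) else 0 := fun i => by rw [hx]
  have hy' : ∀ i, y i = if ¬ i ∈ S then (1:ℝ) else 0 := by
    intro i
    rw [hy, Pi.sub_apply, hx']
    by_cases hi : i ∈ S <;> simp [hi]
  have hdet1 : (γ₁ • (C.hadamard (vecMulVec x x)) + 1 - Matrix.diagonal x).det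
      = γ₁ ^ s * dS := by
    rw [det_gamma_block (fun i => i ∈ S) C γ₁ x hx' s
      ((card_subtype_mem S _).trans hS)]
    congr!
  have hdet2 : (γ₂ • ((C⁻¹).hadamard (vecMulVec y y)) + 1 - Matrix.diagonal y).det
      = γ₂ ^ (n - s) * dT := by
    rw [det_gamma_block (fun i => ¬ i ∈ S) (C⁻¹) γ₂ y hy' (n - s)
      ((card_subtype_not_mem S _).trans (by rw [hS]))]
  rw [gobj, hdet1, hdet2]
  rw [Real.log_mul (pow_ne_zero _ hγ₁.ne') hdSpos.ne',
      Real.log_mul (pow_ne_zero _ hγ₂.ne') hdTpos.ne',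
      Real.log_pow, Real.log_pow]
  have hcast : ((n - s : ℕ) : ℝ) = (n : ℝ) - s := by
    rw [Nat.cast_sub hsn]
  have hlogsum : Real.log dT + Real.log C.det = Real.log dS := by
    rw [← Real.log_mul hdTpos.ne' hdetC.ne', mul_comm, hjac]
  rw [hcast]
  linear_combination α * hlogsum


lemma memP_binary (x : Fin n → ℝ) (hbin : ∀ i, x i * x i = x i) (t : ℝ)
    (ht : (∑ i, x i) = t) : memP n t x (vecMulVec x x) := by
  refine ⟨?_, ?_, ?_, ht, ?_⟩
  · show (vecMulVec x x)ᵀ = vecMulVec x x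
    ext i j
    simp [Matrix.transpose_apply, Matrix.vecMulVec_apply, mul_comm]
  · rw [sub_self]
    exact Matrix.PosSemidef.zero
  · intro i
    simpa [Matrix.vecMulVec_apply] using hbin i
  · funext i
    simp only [Matrix.mulVec, dotProduct, Matrix.vecMulVec_apply, mul_one,
      Pi.smul_apply, smul_eq_mul]
    rw [← Finset.mul_sum, ht, mul_comm]

lemma abs_add_sub_le (a b c : ℝ) : |a + b - c| ≤ |a| + |b| + |c| := by
  rw [sub_eq_add_neg]
  refine (abs_add_le _ _).trans ?_
  rw [abs_neg]
  have := abs_add_le a b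
  linarith

lemma memP_props {t : ℝ} {x : Fin n → ℝ} {X : Matrix (Fin n) (Fin n) ℝ}
    (h : memP n t x X) : (∀ i, 0 ≤ x i ∧ x i ≤ 1) ∧ (∀ i j, |X i j| ≤ 1) := by
  obtain ⟨hsym, hpsd, hdiag, -, -⟩ := h
  have hx01 : ∀ i, 0 ≤ x i ∧ x i ≤ 1 := by
    intro i
    have h0 := psd_diag_nonneg hpsd i
    rw [Matrix.sub_apply, Matrix.vecMulVec_apply, hdiag] at h0
    constructor <;> nlinarith
  have hXpsd : X.PosSemidef := by
    have hXeq : X = (X - vecMulVec x x) + vecMulVec x x := by rw [sub_add_cancel]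
    rw [hXeq]
    exact hpsd.add (psd_vecMulVec x)
  refine ⟨hx01, fun i j => ?_⟩
  have hab := psd_entry_abs_le hXpsd i j
  rw [hdiag, hdiag] at hab
  have hi := hx01 i
  have hj := hx01 j
  linarith

lemma bracket_bound (A : Matrix (Fin n) (Fin n) ℝ) {γ : ℝ} (hγ : 0 < γ)
    (x : Fin n → ℝ) (X : Matrix (Fin n) (Fin n) ℝ)
    (hx01 : ∀ i, 0 ≤ x i ∧ x i ≤ 1) (hXb : ∀ i j, |X i j| ≤ 1) :
    Real.log (γ • (A.hadamard X) + 1 - Matrix.diagonal x).det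
      ≤ Real.log ((n.factorial : ℝ) * (γ * ((∑ i, ∑ j, |A i j|) + 1) + 2) ^ n) := by
  set K : ℝ := (∑ i, ∑ j, |A i j|) + 1 with hK
  have hsnn : 0 ≤ ∑ i, ∑ j, |A i j| :=
    Finset.sum_nonneg fun i _ => Finset.sum_nonneg fun j _ => abs_nonneg _
  have hK1 : 1 ≤ K := by rw [hK]; linarith
  have hKb : ∀ i j, |A i j| ≤ K := by
    intro i j
    have h1 : |A i j| ≤ ∑ j', |A i j'| :=
      Finset.single_le_sum (f := fun j' => |A i j'|) (fun _ _ => abs_nonneg _) (Finset.mem_univ j)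
    have h2 : ∑ j', |A i j'| ≤ ∑ i', ∑ j', |A i' j'| :=
      Finset.single_le_sum (f := fun i' => ∑ j', |A i' j'|)
        (fun _ _ => Finset.sum_nonneg fun _ _ => abs_nonneg _) (Finset.mem_univ i)
    rw [hK]; linarith
  apply logdet_le (by nlinarith)
  intro i j
  have hentry : (γ • (A.hadamard X) + 1 - Matrix.diagonal x) i j
      = γ * (A i j * X i j) + (if i = j then (1:ℝ) else 0) - (if i = j then x i else 0) := by
    simp [Matrix.sub_apply, Matrix.add_apply, Matrix.smul_apply, Matrix.hadamard_apply,
      Matrix.one_apply, Matrix.diagonal_apply, smul_eq_mul]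
  rw [hentry]
  have h1 : |γ * (A i j * X i j)| ≤ γ * K := by
    rw [abs_mul, abs_mul, abs_of_pos hγ]
    have ha := hKb i j
    have hb := hXb i j
    have hc := abs_nonneg (A i j)
    have hd := abs_nonneg (X i j)
    have hKnn : (0:ℝ) ≤ K := by linarith
    have hprod : |A i j| * |X i j| ≤ K * 1 := mul_le_mul ha hb hd hKnn
    nlinarith
  have h2 : |(if i = j then (1:ℝ) else 0)| ≤ 1 := by split <;> simp
  have h3 : |(if i = j then x i else 0)| ≤ 1 := by
    split
    · rw [abs_of_nonneg (hx01 i).1]; exact (hx01 i).2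
    · simp
  calc |γ * (A i j * X i j) + (if i = j then (1:ℝ) else 0) - (if i = j then x i else 0)|
      ≤ |γ * (A i j * X i j)| + |(if i = j then (1:ℝ) else 0)| + |(if i = j then x i else 0)| :=
        abs_add_sub_le _ _ _
    _ ≤ γ * K + 2 := by linarith

end H2

/-- For every `S` with `|S| = s`, the binary lift
`(x_S, x_S x_Sᵀ, e - x_S, (e - x_S)(e - x_S)ᵀ)` is feasible for the mBQP
relaxation and its objective value is `log det C[S,S]`; consequently
`z(C,s) ≤ v(C,s;α,γ₁,γ₂)`. -/
theorem stmt_12 (n : ℕ) (C : Matrix (Fin n) (Fin n) ℝ) (hC : C.PosDef)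
    (s : ℕ) (hs1 : 1 ≤ s) (hs2 : s ≤ n - 1)
    (α γ₁ γ₂ : ℝ) (hα : α ∈ Set.Icc (0 : ℝ) 1) (hγ₁ : 0 < γ₁) (hγ₂ : 0 < γ₂) :
    (∀ S : Finset (Fin n), S.card = s → ∀ x y : Fin n → ℝ,
      x = (fun i => if i ∈ S then (1 : ℝ) else 0) →
      y = (fun _ => (1 : ℝ)) - x →
        memP n (s : ℝ) x (vecMulVec x x) ∧
        memP n ((n : ℝ) - s) y (vecMulVec y y) ∧
        x + y = (fun _ => (1 : ℝ)) ∧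
        gobj n C s α γ₁ γ₂ x (vecMulVec x x) y (vecMulVec y y)
          = Real.log (C.submatrix (fun i : {i // i ∈ S} => (i : Fin n))
              (fun i : {i // i ∈ S} => (i : Fin n))).det)
    ∧ zval n C s ≤ vmix n C s α γ₁ γ₂ := by
  have hsn : s ≤ n := hs2.trans (Nat.sub_le n 1)
  have hn1 : 1 ≤ n := by omega
  have part1 : ∀ S : Finset (Fin n), S.card = s → ∀ x y : Fin n → ℝ,
      x = (fun i => if i ∈ S then (1 : ℝ) else 0) →
      y = (fun _ => (1 : ℝ)) - x →
        memP n (s : ℝ) x (vecMulVec x x) ∧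
        memP n ((n : ℝ) - s) y (vecMulVec y y) ∧
        x + y = (fun _ => (1 : ℝ)) ∧
        gobj n C s α γ₁ γ₂ x (vecMulVec x x) y (vecMulVec y y)
          = Real.log (C.submatrix (fun i : {i // i ∈ S} => (i : Fin n))
              (fun i : {i // i ∈ S} => (i : Fin n))).det := by
    intro S hS x y hx hy
    have hx' : ∀ i, x i = if i ∈ S then (1:ℝ) else 0 := fun i => by rw [hx]
    have hy' : ∀ i, y i = 1 - x i := fun i => by rw [hy]; rfl
    have hbinx : ∀ i, x i * x i = x i := by
      intro i
      rw [hx']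
      by_cases h : i ∈ S <;> simp [h]
    have hbiny : ∀ i, y i * y i = y i := by
      intro i
      rw [hy', hx']
      by_cases h : i ∈ S <;> simp [h]
    have hsumx : (∑ i, x i) = (s:ℝ) := by
      simp only [hx']
      rw [Finset.sum_ite_mem, Finset.univ_inter, Finset.sum_const, hS]
      simp
    have hsumy : (∑ i, y i) = (n:ℝ) - s := by
      simp only [hy']
      rw [Finset.sum_sub_distrib, hsumx, Finset.sum_const, Finset.card_univ, Fintype.card_fin]
      simp
    refine ⟨memP_binary x hbinx _ hsumx, memP_binary y hbiny _ hsumy, ?_,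
      gobj_eq hC hsn α γ₁ γ₂ hγ₁ hγ₂ S hS x y hx hy⟩
    funext i
    have := hy' i
    simp only [Pi.add_apply]
    rw [this]
    ring
  refine ⟨part1, ?_⟩
  -- the sets
  set K₁ : ℝ := (∑ i, ∑ j, |C i j|) + 1 with hK₁
  set K₂ : ℝ := (∑ i, ∑ j, |(C⁻¹) i j|) + 1 with hK₂
  set E₁ : ℝ := Real.log ((n.factorial : ℝ) * (γ₁ * K₁ + 2) ^ n) with hE₁
  set E₂ : ℝ := Real.log ((n.factorial : ℝ) * (γ₂ * K₂ + 2) ^ n) with hE₂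
  set D₁ : ℝ := |E₁| + s * |Real.log γ₁| with hD₁def
  set D₂ : ℝ := |E₂| + ((n:ℝ) - s) * |Real.log γ₂| + |Real.log C.det| with hD₂def
  have hns : (0:ℝ) ≤ (n:ℝ) - s := by
    have : (s:ℝ) ≤ (n:ℝ) := by exact_mod_cast hsn
    linarith
  have hD₁ : 0 ≤ D₁ := by
    have := abs_nonneg E₁
    have := abs_nonneg (Real.log γ₁)
    have : (0:ℝ) ≤ (s:ℝ) * |Real.log γ₁| := by positivity
    rw [hD₁def]
    linarith [abs_nonneg E₁]
  have hD₂ : 0 ≤ D₂ := by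
    have h1 : (0:ℝ) ≤ ((n:ℝ) - s) * |Real.log γ₂| :=
      mul_nonneg hns (abs_nonneg _)
    rw [hD₂def]
    linarith [abs_nonneg E₂, abs_nonneg (Real.log C.det)]
  have hVbdd : BddAbove {r : ℝ | ∃ x X y Y, memP n (s : ℝ) x X ∧ memP n ((n : ℝ) - s) y Y ∧
      x + y = (fun _ => (1 : ℝ)) ∧ r = gobj n C s α γ₁ γ₂ x X y Y} := by
    refine ⟨D₁ + D₂, ?_⟩
    rintro r ⟨x, X, y, Y, h1, h2, -, rfl⟩
    obtain ⟨hx01, hXb⟩ := memP_props h1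
    obtain ⟨hy01, hYb⟩ := memP_props h2
    have b1 := bracket_bound C hγ₁ x X hx01 hXb
    have b2 := bracket_bound (C⁻¹) hγ₂ y Y hy01 hYb
    rw [← hK₁, ← hE₁] at b1
    rw [← hK₂, ← hE₂] at b2
    rw [gobj]
    have hb1 : Real.log (γ₁ • (C.hadamard X) + 1 - Matrix.diagonal x).det
        - s * Real.log γ₁ ≤ D₁ := by
      have hmul : -((s:ℝ) * Real.log γ₁) ≤ (s:ℝ) * |Real.log γ₁| := by
        have : -Real.log γ₁ ≤ |Real.log γ₁| := neg_le_abs _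
        have h2 : (s:ℝ) * (-Real.log γ₁) ≤ (s:ℝ) * |Real.log γ₁| :=
          mul_le_mul_of_nonneg_left this (Nat.cast_nonneg s)
        linarith [h2, (by ring : (s:ℝ) * (-Real.log γ₁) = -((s:ℝ) * Real.log γ₁))]
      rw [hD₁def]
      linarith [le_abs_self E₁, b1]
    have hb2 : Real.log (γ₂ • ((C⁻¹).hadamard Y) + 1 - Matrix.diagonal y).det
        - ((n:ℝ) - s) * Real.log γ₂ + Real.log C.det ≤ D₂ := by
      have hmul : -(((n:ℝ) - s) * Real.log γ₂) ≤ ((n:ℝ) - s) * |Real.log γ₂| := by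
        have : -Real.log γ₂ ≤ |Real.log γ₂| := neg_le_abs _
        have h2 : ((n:ℝ) - s) * (-Real.log γ₂) ≤ ((n:ℝ) - s) * |Real.log γ₂| :=
          mul_le_mul_of_nonneg_left this hns
        linarith [h2, (by ring : ((n:ℝ) - s) * (-Real.log γ₂) = -(((n:ℝ) - s) * Real.log γ₂))]
      rw [hD₂def]
      linarith [le_abs_self E₂, le_abs_self (Real.log C.det), b2]
    have hα0 := hα.1
    have hα1 := hα.2
    have k1 : (1 - α) * (Real.log (γ₁ • (C.hadamard X) + 1 - Matrix.diagonal x).det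
        - s * Real.log γ₁) ≤ (1 - α) * D₁ :=
      mul_le_mul_of_nonneg_left hb1 (by linarith)
    have k2 : α * (Real.log (γ₂ • ((C⁻¹).hadamard Y) + 1 - Matrix.diagonal y).det
        - ((n:ℝ) - s) * Real.log γ₂ + Real.log C.det) ≤ α * D₂ :=
      mul_le_mul_of_nonneg_left hb2 hα0
    nlinarith [k1, k2, hD₁, hD₂]
  have hZne : {r : ℝ | ∃ S : Finset (Fin n), S.card = s ∧
      r = Real.log (C.submatrix (fun i : {i // i ∈ S} => (i : Fin n))
          (fun i : {i // i ∈ S} => (i : Fin n))).det}.Nonempty := by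
    obtain ⟨S₀, -, hS₀⟩ := Finset.exists_subset_card_eq (s := (Finset.univ : Finset (Fin n))) (n := s)
      (by rw [Finset.card_univ, Fintype.card_fin]; omega)
    exact ⟨_, S₀, hS₀, rfl⟩
  have hsubset : {r : ℝ | ∃ S : Finset (Fin n), S.card = s ∧
      r = Real.log (C.submatrix (fun i : {i // i ∈ S} => (i : Fin n))
          (fun i : {i // i ∈ S} => (i : Fin n))).det}
      ⊆ {r : ℝ | ∃ x X y Y, memP n (s : ℝ) x X ∧ memP n ((n : ℝ) - s) y Y ∧
      x + y = (fun _ => (1 : ℝ)) ∧ r = gobj n C s α γ₁ γ₂ x X y Y} := by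
    rintro r ⟨S, hS, rfl⟩
    set x : Fin n → ℝ := fun i => if i ∈ S then (1 : ℝ) else 0 with hxdef
    set y : Fin n → ℝ := (fun _ => (1 : ℝ)) - x with hydef
    obtain ⟨hm1, hm2, hm3, hm4⟩ := part1 S hS x y hxdef hydef
    exact ⟨x, vecMulVec x x, y, vecMulVec y y, hm1, hm2, hm3, hm4.symm⟩
  exact csSup_le_csSup hVbdd hZne hsubset
end

section
/- Let C be an n×n real symmetric positive-definite matrix, let s be an integer with 1 ≤ s ≤ n−1, and let γ₁ > 0, γ₂ > 0. Then v(C,s; α=0, γ₁, γ₂) = sup { log det(γ₁(C∘X) + I − diag(x)) − s·log γ₁ : (x,X) ∈ P(n,s) }; that is, at α = 0 the mBQP bound equals the scaled BQP bound. -/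
open Matrix

/-- The strengthened mBQP bound `v̌(C,s;α,γ₁,γ₂)`, obtained by substituting
`y = e - x` and `Y = X + eeᵀ - exᵀ - xeᵀ`. -/
noncomputable def vcheck (n : ℕ) (C : Matrix (Fin n) (Fin n) ℝ) (s : ℕ)
    (α γ₁ γ₂ : ℝ) : ℝ :=
  sSup {r : ℝ | ∃ x X, memP n (s : ℝ) x X ∧
    r = gobj n C s α γ₁ γ₂ x X ((fun _ => (1 : ℝ)) - x)
      (X + vecMulVec (fun _ => (1 : ℝ)) (fun _ => (1 : ℝ))
        - vecMulVec (fun _ => (1 : ℝ)) x - vecMulVec x (fun _ => (1 : ℝ)))}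

/-- At `α = 0` the mBQP bound equals the scaled BQP bound. -/
theorem stmt_13 (n : ℕ) (C : Matrix (Fin n) (Fin n) ℝ) (hC : C.PosDef)
    (s : ℕ) (hs1 : 1 ≤ s) (hs2 : s ≤ n - 1) (γ₁ γ₂ : ℝ)
    (hγ₁ : 0 < γ₁) (hγ₂ : 0 < γ₂) :
    vmix n C s 0 γ₁ γ₂ =
      sSup {r : ℝ | ∃ x X, memP n (s : ℝ) x X ∧
        r = Real.log (γ₁ • (C.hadamard X) + 1 - Matrix.diagonal x).det
          - s * Real.log γ₁} := by
  unfold vmix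
  congr 1
  ext r
  constructor
  · rintro ⟨x, X, y, Y, hx, hy, hxy, rfl⟩
    exact ⟨x, X, hx, by simp [gobj]⟩
  · rintro ⟨x, X, hx, rfl⟩
    obtain ⟨hsym, hpsd, hdiag, hsum, hmul⟩ := hx
    refine ⟨x, X, (fun _ => (1 : ℝ)) - x,
      X + vecMulVec (fun _ => (1 : ℝ)) (fun _ => (1 : ℝ))
        - vecMulVec (fun _ => (1 : ℝ)) x - vecMulVec x (fun _ => (1 : ℝ)),
      ⟨hsym, hpsd, hdiag, hsum, hmul⟩, ?_, ?_, by simp [gobj]⟩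
    · refine ⟨?_, ?_, ?_, ?_, ?_⟩
      · unfold Matrix.IsSymm
        ext i j
        simp [Matrix.transpose_apply, Matrix.sub_apply, Matrix.add_apply,
          Matrix.vecMulVec_apply, hsym.apply i j]
        ring
      · have : X + vecMulVec (fun _ => (1 : ℝ)) (fun _ => (1 : ℝ))
            - vecMulVec (fun _ => (1 : ℝ)) x - vecMulVec x (fun _ => (1 : ℝ))
            - vecMulVec ((fun _ => (1 : ℝ)) - x) ((fun _ => (1 : ℝ)) - x)
            = X - vecMulVec x x := by
          ext i j
          simp [Matrix.sub_apply, Matrix.add_apply, Matrix.vecMulVec_apply,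
            Pi.sub_apply]
          ring
        rw [this]
        exact hpsd
      · intro i
        simp [Matrix.sub_apply, Matrix.add_apply, Matrix.vecMulVec_apply,
          hdiag i, Pi.sub_apply]
      · simp [Finset.sum_sub_distrib, hsum]
      · have hme : ∀ i, (X *ᵥ (fun _ => (1 : ℝ))) i = (s : ℝ) * x i := by
          intro i; rw [hmul]; simp
        ext i
        have h1 : ∑ j, X i j = (s : ℝ) * x i := by
          have := hme i
          simpa [Matrix.mulVec, dotProduct] using this
        simp only [Matrix.mulVec, dotProduct, Matrix.sub_apply, Matrix.add_apply,
          Matrix.vecMulVec_apply, Pi.smul_apply, Pi.sub_apply, smul_eq_mul]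
        simp only [mul_one]
        rw [Finset.sum_sub_distrib, Finset.sum_sub_distrib, Finset.sum_add_distrib,
          h1]
        simp [hsum, Finset.sum_const, Finset.mul_sum]
        ring
    · ext i; simp
end

section
/- Let C be an n×n real symmetric positive-definite matrix, let s be an integer with 1 ≤ s ≤ n−1, and let γ₁ > 0, γ₂ > 0. Then v(C,s; α=1, γ₁, γ₂) = log det C − (n−s)·log γ₂ + sup { log det(γ₂(C⁻¹∘Y) + I − diag(y)) : (y,Y) ∈ Q(n,n−s) }; that is, at α = 1 the mBQP bound equals the scaled complementary BQP bound. -/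
open Matrix

private lemma quad_pair {n : ℕ} {Z : Matrix (Fin n) (Fin n) ℝ} (hZ : Z.PosSemidef)
    (i j : Fin n) (a b : ℝ) :
    0 ≤ a * (Z i i * a + Z i j * b) + b * (Z j i * a + Z j j * b) := by
  have h := hZ.dotProduct_mulVec_nonneg (Pi.single i a + Pi.single j b : Fin n → ℝ)
  simp only [star_trivial, mulVec_add, mulVec_single, add_dotProduct, single_dotProduct,
    Pi.add_apply] at h
  simp only [Pi.smul_apply, Matrix.col_apply, op_smul_eq_mul] at h
  nlinarith [h]

private lemma abs_det_le_of_entries {n : ℕ} {M : Matrix (Fin n) (Fin n) ℝ} {K : ℝ} (hK : 0 ≤ K)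
    (h : ∀ i j, |M i j| ≤ K) : |M.det| ≤ (Nat.factorial n : ℝ) * K ^ n := by
  rw [Matrix.det_apply]
  calc |∑ σ : Equiv.Perm (Fin n), Equiv.Perm.sign σ • ∏ i, M (σ i) i|
      ≤ ∑ σ : Equiv.Perm (Fin n), |Equiv.Perm.sign σ • ∏ i, M (σ i) i| :=
        Finset.abs_sum_le_sum_abs _ _
    _ ≤ ∑ _σ : Equiv.Perm (Fin n), K ^ n := by
        refine Finset.sum_le_sum fun σ _ => ?_
        have h1 : |Equiv.Perm.sign σ • ∏ i, M (σ i) i| = |∏ i, M (σ i) i| := by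
          rcases Int.units_eq_one_or (Equiv.Perm.sign σ) with h' | h' <;> simp [h']
        rw [h1, Finset.abs_prod]
        calc ∏ i, |M (σ i) i| ≤ ∏ _i : Fin n, K :=
              Finset.prod_le_prod (fun i _ => abs_nonneg _) (fun i _ => h _ _)
          _ = K ^ n := by simp
    _ = (Nat.factorial n : ℝ) * K ^ n := by
        simp [Finset.sum_const, Finset.card_univ, Fintype.card_perm, Fintype.card_fin,
          nsmul_eq_mul]

private lemma entry_bounds {n : ℕ} {t : ℝ} {y : Fin n → ℝ} {Y : Matrix (Fin n) (Fin n) ℝ}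
    (h : memP n t y Y) : (∀ i, 0 ≤ y i ∧ y i ≤ 1) ∧ (∀ i j, |Y i j| ≤ 2) := by
  obtain ⟨hsym, hpsd, hdiag, -, -⟩ := h
  have hZ : ∀ i j, (Y - vecMulVec y y) i j = Y i j - y i * y j := fun i j => by
    simp [Matrix.sub_apply, vecMulVec_apply]
  have hZii : ∀ i, (Y - vecMulVec y y) i i = y i - y i * y i := fun i => by
    rw [hZ, hdiag]
  have hdnn : ∀ i, 0 ≤ y i - y i * y i := by
    intro i
    have := quad_pair hpsd i i 1 0
    rw [hZii] at this
    linarith [this]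
  have hy : ∀ i, 0 ≤ y i ∧ y i ≤ 1 := by
    intro i
    constructor <;> nlinarith [hdnn i]
  refine ⟨hy, fun i j => ?_⟩
  have hZsym : (Y - vecMulVec y y) j i = (Y - vecMulVec y y) i j := by
    have h1 := congrFun (congrFun hpsd.1 j) i
    simpa [Matrix.conjTranspose_apply] using h1.symm
  have hub : ∀ k, y k - y k * y k ≤ 1/4 := fun k => by nlinarith [sq_nonneg (y k - 1/2)]
  have q1 := quad_pair hpsd i j 1 1
  have q2 := quad_pair hpsd i j 1 (-1)
  rw [hZii i, hZii j, hZsym] at q1 q2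
  have hZb : |(Y - vecMulVec y y) i j| ≤ 1/2 := by
    rw [abs_le]
    constructor <;> nlinarith [hub i, hub j]
  have : Y i j = (Y - vecMulVec y y) i j + y i * y j := by rw [hZ]; ring
  rw [this]
  calc |(Y - vecMulVec y y) i j + y i * y j|
      ≤ |(Y - vecMulVec y y) i j| + |y i * y j| := abs_add_le _ _
    _ ≤ 1/2 + 1 := by
        refine add_le_add hZb ?_
        rw [abs_mul]
        have := hy i; have := hy j
        calc |y i| * |y j| ≤ 1 * 1 := by
              refine mul_le_mul ?_ ?_ (abs_nonneg _) zero_le_one <;>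
                rw [abs_of_nonneg] <;> tauto
          _ = 1 := by ring
    _ ≤ 2 := by norm_num

private lemma completeQ {n s : ℕ} {y : Fin n → ℝ} {Y : Matrix (Fin n) (Fin n) ℝ}
    (hQ : memP n ((n : ℝ) - s) y Y) :
    ∃ x X, memP n (s : ℝ) x X ∧ x + y = (fun _ => (1 : ℝ)) := by
  obtain ⟨hsym, hpsd, hdiag, hsum, hmul⟩ := hQ
  set e : Fin n → ℝ := fun _ => (1 : ℝ) with he
  refine ⟨e - y, Y + vecMulVec e e - vecMulVec e y - vecMulVec y e,
    ⟨?_, ?_, ?_, ?_, ?_⟩, by funext i; simp [he]⟩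
  · show _ = _
    ext i j
    simp only [Matrix.transpose_apply, Matrix.sub_apply, Matrix.add_apply, vecMulVec_apply, he]
    rw [hsym.apply i j]
    ring
  · have key : Y + vecMulVec e e - vecMulVec e y - vecMulVec y e - vecMulVec (e - y) (e - y)
        = Y - vecMulVec y y := by
      ext i j
      simp only [Matrix.sub_apply, Matrix.add_apply, vecMulVec_apply, Pi.sub_apply, he]
      ring
    rw [key]; exact hpsd
  · intro i
    simp only [Matrix.sub_apply, Matrix.add_apply, vecMulVec_apply, Pi.sub_apply, he, hdiag]
    ring
  · have : ∀ i, (e - y) i = 1 - y i := fun i => by simp [he]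
    simp only [this]
    rw [Finset.sum_sub_distrib, hsum]
    simp
  · funext i
    have h5 := congrFun hmul i
    simp only [he, mulVec, dotProduct, Pi.smul_apply, smul_eq_mul, mul_one] at h5 ⊢
    simp only [Matrix.sub_apply, Matrix.add_apply, vecMulVec_apply, Pi.sub_apply, he,
      Finset.sum_sub_distrib, Finset.sum_add_distrib, hsum, mul_one, one_mul,
      Finset.sum_const, Finset.card_univ, Fintype.card_fin, nsmul_eq_mul]
    rw [h5]
    ring

private lemma feasQ {n s : ℕ} (hs1 : 1 ≤ s) (hsn : s + 1 ≤ n) :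
    ∃ y Y, memP n ((n : ℝ) - s) y Y := by
  classical
  set y : Fin n → ℝ := fun i => if (i : ℕ) < n - s then 1 else 0 with hy
  have hy01 : ∀ i, y i * y i = y i := fun i => by
    by_cases h : (i : ℕ) < n - s <;> simp [hy, h]
  have hsum : ∑ i, y i = (n : ℝ) - s := by
    rw [hy]
    rw [Fin.sum_univ_eq_sum_range (fun i => if i < n - s then (1 : ℝ) else 0) n]
    rw [Finset.sum_boole]
    have hfil : (Finset.range n).filter (fun i => i < n - s) = Finset.range (n - s) := by
      ext k; simp only [Finset.mem_filter, Finset.mem_range]; omega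
    rw [hfil, Finset.card_range]
    have : ((n - s : ℕ) : ℝ) = (n : ℝ) - s := by
      rw [Nat.cast_sub (by omega : s ≤ n)]
    simpa using this
  refine ⟨y, vecMulVec y y, ?_, ?_, ?_, hsum, ?_⟩
  · show _ = _
    ext i j
    simp only [Matrix.transpose_apply, vecMulVec_apply]
    ring
  · simpa using (Matrix.PosSemidef.zero (n := Fin n) (R := ℝ))
  · intro i; simp [vecMulVec_apply, hy01]
  · funext i
    simp only [mulVec, dotProduct, vecMulVec_apply, mul_one, Pi.smul_apply, smul_eq_mul,
      ← Finset.mul_sum, hsum]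
    ring

private lemma sSup_image_add (c : ℝ) {B : Set ℝ} (hne : B.Nonempty) (hbdd : BddAbove B) :
    sSup ((fun r => c + r) '' B) = c + sSup B := by
  obtain ⟨M, hM⟩ := hbdd
  have hbddI : BddAbove ((fun r => c + r) '' B) := by
    refine ⟨c + M, ?_⟩
    rintro r ⟨b, hb, rfl⟩
    exact add_le_add_right (hM hb) c
  refine le_antisymm ?_ ?_
  · refine csSup_le (hne.image _) ?_
    rintro r ⟨b, hb, rfl⟩
    exact add_le_add_right (le_csSup ⟨M, hM⟩ hb) c
  · have : sSup B ≤ sSup ((fun r => c + r) '' B) - c := by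
      refine csSup_le hne fun b hb => ?_
      have h2 := le_csSup hbddI ⟨b, hb, rfl⟩
      simp only at h2
      linarith
    linarith

theorem aux_stmt_14 (n : ℕ) (C : Matrix (Fin n) (Fin n) ℝ)
    (s : ℕ) (hs1 : 1 ≤ s) (hs2 : s ≤ n - 1) (γ₁ γ₂ : ℝ)
    (hγ₁ : 0 < γ₁) (hγ₂ : 0 < γ₂) :
    sSup {r : ℝ | ∃ x X y Y, memP n (s : ℝ) x X ∧ memP n ((n : ℝ) - s) y Y ∧
      x + y = (fun _ => (1 : ℝ)) ∧ r = (1 - (1:ℝ)) * (Real.log (γ₁ • (C.hadamard X) + 1 - Matrix.diagonal x).det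
      - s * Real.log γ₁)
  + 1 * (Real.log (γ₂ • ((C⁻¹).hadamard Y) + 1 - Matrix.diagonal y).det
      - ((n : ℝ) - s) * Real.log γ₂ + Real.log C.det)} =
      Real.log C.det - ((n : ℝ) - s) * Real.log γ₂ +
        sSup {r : ℝ | ∃ y Y, memP n ((n : ℝ) - s) y Y ∧
          r = Real.log (γ₂ • ((C⁻¹).hadamard Y) + 1 - Matrix.diagonal y).det} := by
  have hn : s + 1 ≤ n := by omega
  set c := Real.log C.det - ((n : ℝ) - s) * Real.log γ₂ with hc
  set B := {r : ℝ | ∃ y Y, memP n ((n : ℝ) - s) y Y ∧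
      r = Real.log (γ₂ • ((C⁻¹).hadamard Y) + 1 - Matrix.diagonal y).det} with hB
  have hEq : {r : ℝ | ∃ x X y Y, memP n (s : ℝ) x X ∧ memP n ((n : ℝ) - s) y Y ∧
      x + y = (fun _ => (1 : ℝ)) ∧ r = (1 - (1:ℝ)) * (Real.log (γ₁ • (C.hadamard X) + 1 - Matrix.diagonal x).det
      - s * Real.log γ₁)
  + 1 * (Real.log (γ₂ • ((C⁻¹).hadamard Y) + 1 - Matrix.diagonal y).det
      - ((n : ℝ) - s) * Real.log γ₂ + Real.log C.det)}
      = (fun r => c + r) '' B := by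
    ext r
    simp only [hB, Set.mem_setOf_eq, Set.mem_image]
    constructor
    · rintro ⟨x, X, y, Y, hP, hQ, hxy, rfl⟩
      refine ⟨Real.log (γ₂ • ((C⁻¹).hadamard Y) + 1 - Matrix.diagonal y).det,
        ⟨y, Y, hQ, rfl⟩, ?_⟩
      rw [hc]; ring
    · rintro ⟨b, ⟨y, Y, hQ, rfl⟩, rfl⟩
      obtain ⟨x, X, hP, hxy⟩ := completeQ hQ
      exact ⟨x, X, y, Y, hP, hQ, hxy, by rw [hc]; ring⟩
  obtain ⟨y₀, Y₀, hQ₀⟩ := feasQ hs1 hn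
  have hBne : B.Nonempty := ⟨_, ⟨y₀, Y₀, hQ₀, rfl⟩⟩
  have hBbdd : BddAbove B := by
    set Kc := ∑ i, ∑ j, |C⁻¹ i j| with hKc
    have hKc0 : 0 ≤ Kc := by positivity
    have hKcb : ∀ i j, |C⁻¹ i j| ≤ Kc := by
      intro i j
      calc |C⁻¹ i j| ≤ ∑ j', |C⁻¹ i j'| :=
            Finset.single_le_sum (f := fun j' => |C⁻¹ i j'|)
              (fun _ _ => abs_nonneg _) (Finset.mem_univ j)
        _ ≤ Kc := Finset.single_le_sum (f := fun i' => ∑ j', |C⁻¹ i' j'|)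
            (fun _ _ => Finset.sum_nonneg fun _ _ => abs_nonneg _) (Finset.mem_univ i)
    have hK0 : (0:ℝ) ≤ γ₂ * Kc * 2 + 2 := by positivity
    refine ⟨(n.factorial : ℝ) * (γ₂ * Kc * 2 + 2) ^ n, ?_⟩
    rintro r ⟨y, Y, hQ, rfl⟩
    obtain ⟨hy, hY⟩ := entry_bounds hQ
    have hM : ∀ i j, |(γ₂ • ((C⁻¹).hadamard Y) + 1 - Matrix.diagonal y) i j|
        ≤ γ₂ * Kc * 2 + 2 := by
      intro i j
      have hsplit : (γ₂ • ((C⁻¹).hadamard Y) + 1 - Matrix.diagonal y) i j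
          = γ₂ * (C⁻¹ i j * Y i j) + (1 : Matrix (Fin n) (Fin n) ℝ) i j
            - Matrix.diagonal y i j := by
        simp [Matrix.sub_apply, Matrix.add_apply, Matrix.smul_apply, Matrix.hadamard_apply]
      rw [hsplit]
      have h1 : |γ₂ * (C⁻¹ i j * Y i j)| ≤ γ₂ * Kc * 2 := by
        rw [abs_mul, abs_mul, abs_of_pos hγ₂, mul_assoc]
        refine mul_le_mul_of_nonneg_left ?_ hγ₂.le
        exact mul_le_mul (hKcb i j) (hY i j) (abs_nonneg _) hKc0
      have h2 : |(1 : Matrix (Fin n) (Fin n) ℝ) i j| ≤ 1 := by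
        by_cases h : i = j <;> simp [Matrix.one_apply, h]
      have h3 : |Matrix.diagonal y i j| ≤ 1 := by
        by_cases h : i = j
        · subst h
          rw [Matrix.diagonal_apply_eq, abs_of_nonneg (hy i).1]
          exact (hy i).2
        · simp [Matrix.diagonal_apply_ne _ h]
      have t1 := abs_add_le (γ₂ * (C⁻¹ i j * Y i j)) ((1 : Matrix (Fin n) (Fin n) ℝ) i j)
      have t2 := abs_sub (γ₂ * (C⁻¹ i j * Y i j) + (1 : Matrix (Fin n) (Fin n) ℝ) i j)
        (Matrix.diagonal y i j)
      linarith
    have hdet := abs_det_le_of_entries hK0 hM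
    calc Real.log (γ₂ • ((C⁻¹).hadamard Y) + 1 - Matrix.diagonal y).det
        ≤ |(γ₂ • ((C⁻¹).hadamard Y) + 1 - Matrix.diagonal y).det| := by
          rw [← Real.log_abs]
          exact Real.log_le_self (abs_nonneg _)
      _ ≤ _ := hdet
  rw [hEq, sSup_image_add c hBne hBbdd, hc]

/-- At `α = 1` the mBQP bound equals the scaled complementary
BQP bound. -/
theorem stmt_14 (n : ℕ) (C : Matrix (Fin n) (Fin n) ℝ) (hC : C.PosDef)
    (s : ℕ) (hs1 : 1 ≤ s) (hs2 : s ≤ n - 1) (γ₁ γ₂ : ℝ)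
    (hγ₁ : 0 < γ₁) (hγ₂ : 0 < γ₂) :
    vmix n C s 1 γ₁ γ₂ =
      Real.log C.det - ((n : ℝ) - s) * Real.log γ₂ +
        sSup {r : ℝ | ∃ y Y, memP n ((n : ℝ) - s) y Y ∧
          r = Real.log (γ₂ • ((C⁻¹).hadamard Y) + 1 - Matrix.diagonal y).det} := by
  unfold vmix
  simp only [gobj]
  exact aux_stmt_14 n C s hs1 hs2 γ₁ γ₂ hγ₁ hγ₂
end

section
/- Let C be an n×n real symmetric positive-definite matrix, let γ > 0, and let x ∈ ℝⁿ satisfy 0 ≤ x_i ≤ 1 for all i. Then the matrix F(γ,x) := γ·C·diag(x)·C + I − diag(x) is positive definite. -/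
open Matrix

/-- For `C ≻ 0`, `γ > 0`, and `0 ≤ x ≤ e`, the linx matrix
`F(γ,x) = γ C diag(x) C + I - diag(x)` is positive definite. -/
theorem stmt_18 (n : ℕ) (C : Matrix (Fin n) (Fin n) ℝ) (hC : C.PosDef)
    (γ : ℝ) (hγ : 0 < γ) (x : Fin n → ℝ) (hx : ∀ i, 0 ≤ x i ∧ x i ≤ 1) :
    (γ • (C * Matrix.diagonal x * C) + 1 - Matrix.diagonal x).PosDef := by
  have hCH : Cᴴ = C := hC.1
  refine Matrix.PosDef.of_dotProduct_mulVec_pos ?_ ?_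
  · have h1 : (C * Matrix.diagonal x * C).IsHermitian := by
      have := Matrix.isHermitian_mul_mul_conjTranspose C
        (Matrix.isHermitian_diagonal x)
      rwa [hCH] at this
    have h2 : (γ • (C * Matrix.diagonal x * C)).IsHermitian := by
      unfold Matrix.IsHermitian at h1 ⊢
      rw [Matrix.conjTranspose_smul, h1]
      congr 1
    exact (h2.add Matrix.isHermitian_one).sub (Matrix.isHermitian_diagonal x)
  · intro v hv
    have hstar : star v = v := by simp
    rw [hstar]
    set w : Fin n → ℝ := C *ᵥ v with hw
    -- rewrite the quadratic form as a sum
    have key : v ⬝ᵥ ((γ • (C * Matrix.diagonal x * C) + 1 - Matrix.diagonal x) *ᵥ v)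
        = ∑ i, (γ * (x i * w i ^ 2) + (1 - x i) * v i ^ 2) := by
      rw [Matrix.sub_mulVec, Matrix.add_mulVec, Matrix.smul_mulVec,
        Matrix.one_mulVec, dotProduct_sub, dotProduct_add,
        dotProduct_smul]
      have hCT : Cᵀ = C := by
        ext i j
        have := congrFun (congrFun hCH i) j
        simpa using this
      have hvm : v ᵥ* C = w := by
        rw [← hCT, Matrix.vecMul_transpose]
      have h3 : v ⬝ᵥ ((C * Matrix.diagonal x * C) *ᵥ v)
          = w ⬝ᵥ (Matrix.diagonal x *ᵥ w) := by
        rw [← Matrix.mulVec_mulVec, ← Matrix.mulVec_mulVec]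
        rw [Matrix.dotProduct_mulVec]
        rw [hvm]
      rw [h3]
      simp only [dotProduct, Matrix.mulVec_diagonal, smul_eq_mul,
        Finset.mul_sum, ← Finset.sum_add_distrib, ← Finset.sum_sub_distrib]
      apply Finset.sum_congr rfl
      intro i _
      ring
    rw [key]
    have hterm : ∀ i, 0 ≤ γ * (x i * w i ^ 2) + (1 - x i) * v i ^ 2 := by
      intro i
      exact add_nonneg (mul_nonneg hγ.le (mul_nonneg (hx i).1 (sq_nonneg _)))
        (mul_nonneg (by linarith [(hx i).2]) (sq_nonneg _))
    rcases eq_or_lt_of_le (Finset.sum_nonneg fun i _ => hterm i) with hzero | hpos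
    · exfalso
      -- each term is zero
      have hall : ∀ i ∈ Finset.univ, γ * (x i * w i ^ 2) + (1 - x i) * v i ^ 2 = 0 :=
        (Finset.sum_eq_zero_iff_of_nonneg fun i _ => hterm i).mp hzero.symm
      have hvw : ∀ i, v i * w i = 0 := by
        intro i
        have h := hall i (Finset.mem_univ i)
        have ha : 0 ≤ γ * (x i * w i ^ 2) :=
          mul_nonneg hγ.le (mul_nonneg (hx i).1 (sq_nonneg _))
        have hb : 0 ≤ (1 - x i) * v i ^ 2 :=
          mul_nonneg (by linarith [(hx i).2]) (sq_nonneg _)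
        have h1 : γ * (x i * w i ^ 2) = 0 := by linarith
        have h2 : (1 - x i) * v i ^ 2 = 0 := by linarith
        have hxw : x i * w i = 0 := by
          rcases mul_eq_zero.mp ((mul_eq_zero.mp h1).resolve_left hγ.ne') with h | h
          · simp [h]
          · rw [pow_eq_zero_iff (two_ne_zero)] at h; simp [h]
        have hxv : x i * v i = v i := by
          rcases mul_eq_zero.mp h2 with h | h
          · have : x i = 1 := by linarith
            rw [this, one_mul]
          · rw [pow_eq_zero_iff (two_ne_zero)] at h; simp [h]
        calc v i * w i = (x i * v i) * w i := by rw [hxv]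
          _ = v i * (x i * w i) := by ring
          _ = 0 := by rw [hxw, mul_zero]
      have hCv : v ⬝ᵥ (C *ᵥ v) = 0 := by
        simp only [dotProduct, ← hw]
        exact Finset.sum_eq_zero fun i _ => hvw i
      have := hC.dotProduct_mulVec_pos hv
      rw [hstar] at this
      rw [hCv] at this
      exact lt_irrefl 0 this
    · exact hpos
end

section
/- Let C be an n×n real symmetric positive-definite matrix and let s be an integer with 1 ≤ s ≤ n. Then the function ψ ↦ sup { log det( e^ψ·C·diag(x)·C + I − diag(x) ) − s·ψ : x ∈ ℝⁿ, eᵀx = s, 0 ≤ x ≤ e } is convex on ℝ; moreover, for each fixed x ∈ ℝⁿ with 0 ≤ x ≤ e, the function ψ ↦ log det( e^ψ·C·diag(x)·C + I − diag(x) ) − s·ψ is convex on ℝ. -/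
open Matrix


/-- convexity of ψ ↦ log (a e^ψ + b) for a,b ≥ 0 not both zero -/
lemma conv_log_aexp (a b : ℝ) (ha : 0 ≤ a) (hb : 0 ≤ b) (hab : 0 < a + b) :
    ConvexOn ℝ Set.univ (fun ψ : ℝ => Real.log (a * Real.exp ψ + b)) := by
  have hpos : ∀ ψ : ℝ, 0 < a * Real.exp ψ + b := by
    intro ψ
    rcases eq_or_lt_of_le ha with h | h
    · simpa [← h] using lt_of_lt_of_le hab (by simp [← h])
    · positivity
  have hd : ∀ ψ : ℝ, HasDerivAt (fun ψ : ℝ => Real.log (a * Real.exp ψ + b))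
      ((a * Real.exp ψ) / (a * Real.exp ψ + b)) ψ := by
    intro ψ
    have h1 : HasDerivAt (fun ψ : ℝ => a * Real.exp ψ + b) (a * Real.exp ψ) ψ :=
      ((Real.hasDerivAt_exp ψ).const_mul a).add_const b
    exact h1.log (hpos ψ).ne'
  have hdiff : Differentiable ℝ (fun ψ : ℝ => Real.log (a * Real.exp ψ + b)) :=
    fun ψ => (hd ψ).differentiableAt
  apply Monotone.convexOn_univ_of_deriv hdiff
  have hderiv : deriv (fun ψ : ℝ => Real.log (a * Real.exp ψ + b)) =
      fun ψ => (a * Real.exp ψ) / (a * Real.exp ψ + b) := funext fun ψ => (hd ψ).deriv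
  rw [hderiv]
  intro x y hxy
  rw [div_le_div_iff₀ (hpos x) (hpos y)]
  have := Real.exp_le_exp.2 hxy
  nlinarith [Real.exp_pos x, Real.exp_pos y, mul_nonneg ha hb]


lemma convexOn_finset_sum {ι : Type*} (t : Finset ι) (f : ι → ℝ → ℝ)
    (h : ∀ i ∈ t, ConvexOn ℝ Set.univ (f i)) :
    ConvexOn ℝ Set.univ (fun ψ => ∑ i ∈ t, f i ψ) := by
  induction t using Finset.cons_induction with
  | empty => simpa using convexOn_const 0 convex_univ
  | cons a t ha ih =>
      simp only [Finset.sum_cons]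
      exact (h a (Finset.mem_cons_self a t)).add (ih fun i hi => h i (Finset.mem_cons_of_mem hi))

lemma convexOn_lin (c : ℝ) : ConvexOn ℝ Set.univ (fun ψ : ℝ => c * ψ) := by
  refine ⟨convex_univ, fun x _ y _ a b _ _ _ => le_of_eq ?_⟩
  simp only [smul_eq_mul]
  ring


lemma sum_indicator_lt (n s : ℕ) (hs2 : s ≤ n) :
    (∑ i : Fin n, (if (i : ℕ) < s then (1:ℝ) else 0)) = (s : ℝ) := by
  rw [Fin.sum_univ_eq_sum_range (fun i => if i < s then (1:ℝ) else 0) n]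
  rw [Finset.sum_ite, Finset.sum_const, Finset.sum_const, smul_zero, add_zero, nsmul_eq_mul,
    mul_one]
  have h : (Finset.range n).filter (fun x => x < s) = Finset.range s := by
    ext k
    simp only [Finset.mem_filter, Finset.mem_range]
    omega
  rw [h, Finset.card_range]


lemma posdef_P {n : ℕ} {C : Matrix (Fin n) (Fin n) ℝ} (hC : C.PosDef)
    {x : Fin n → ℝ} (hx : ∀ i, 0 ≤ x i ∧ x i ≤ 1) :
    (C * Matrix.diagonal x * C + ((1 : Matrix (Fin n) (Fin n) ℝ) - Matrix.diagonal x)).PosDef := by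
  have hCh : Cᴴ = C := hC.1
  refine Matrix.PosDef.of_dotProduct_mulVec_pos ?_ ?_
  · have h1 : (C * Matrix.diagonal x * C).IsHermitian := by
      have := Matrix.isHermitian_conjTranspose_mul_mul C (Matrix.isHermitian_diagonal x)
      rwa [hCh] at this
    exact h1.add ((Matrix.isHermitian_one).sub (Matrix.isHermitian_diagonal x))
  · intro v hv
    have hq : dotProduct (star v)
        ((C * Matrix.diagonal x * C + ((1 : Matrix (Fin n) (Fin n) ℝ) - Matrix.diagonal x)) *ᵥ v)
        = (∑ i, x i * (C *ᵥ v) i ^ 2) + ∑ i, (1 - x i) * (v i) ^ 2 := by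
      rw [add_mulVec, dotProduct_add, sub_mulVec, one_mulVec, dotProduct_sub]
      congr 1
      · have h5 : (C * Matrix.diagonal x * C) *ᵥ v = C *ᵥ (Matrix.diagonal x *ᵥ (C *ᵥ v)) := by
          rw [← mulVec_mulVec, ← mulVec_mulVec]
        rw [h5, star_trivial, dotProduct_mulVec, ← mulVec_transpose]
        have hCt : Cᵀ = C := hC.1
        rw [hCt]
        simp only [dotProduct, mulVec_diagonal]
        exact Finset.sum_congr rfl fun i _ => by ring
      · simp only [star_trivial, dotProduct, mulVec_diagonal, Pi.sub_apply,
          ← Finset.sum_sub_distrib]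
        exact Finset.sum_congr rfl fun i _ => by ring
    rw [hq]
    by_contra hcon
    push_neg at hcon
    have hS1 : ∀ i ∈ Finset.univ, (0:ℝ) ≤ x i * (C *ᵥ v) i ^ 2 :=
      fun i _ => mul_nonneg (hx i).1 (sq_nonneg _)
    have hS2 : ∀ i ∈ Finset.univ, (0:ℝ) ≤ (1 - x i) * (v i) ^ 2 :=
      fun i _ => mul_nonneg (by linarith [(hx i).2]) (sq_nonneg _)
    have hsum1 : (0:ℝ) ≤ ∑ i, x i * (C *ᵥ v) i ^ 2 := Finset.sum_nonneg hS1
    have hsum2 : (0:ℝ) ≤ ∑ i, (1 - x i) * (v i) ^ 2 := Finset.sum_nonneg hS2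
    have h01 : ∑ i, x i * (C *ᵥ v) i ^ 2 = 0 := by linarith
    have h02 : ∑ i, (1 - x i) * (v i) ^ 2 = 0 := by linarith
    rw [Finset.sum_eq_zero_iff_of_nonneg hS1] at h01
    rw [Finset.sum_eq_zero_iff_of_nonneg hS2] at h02
    have hzero : dotProduct (star v) (C *ᵥ v) = 0 := by
      rw [star_trivial]
      simp only [dotProduct]
      apply Finset.sum_eq_zero
      intro i _
      rcases lt_or_eq_of_le (hx i).2 with h | h
      · have := h02 i (Finset.mem_univ i)
        have hvi : v i = 0 := by
          have h1x : (1 : ℝ) - x i ≠ 0 := by linarith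
          have := mul_eq_zero.mp this
          rcases this with h' | h'
          · exact absurd h' h1x
          · exact pow_eq_zero_iff (by norm_num) |>.mp h'
        rw [hvi, zero_mul]
      · have := h01 i (Finset.mem_univ i)
        rw [h, one_mul] at this
        have hwi : (C *ᵥ v) i = 0 := pow_eq_zero_iff (two_ne_zero) |>.mp this
        rw [hwi, mul_zero]
    exact absurd hzero (ne_of_gt (hC.dotProduct_mulVec_pos hv))


lemma linx_decomp {n : ℕ} {C : Matrix (Fin n) (Fin n) ℝ} (hC : C.PosDef)
    {x : Fin n → ℝ} (hx : ∀ i, 0 ≤ x i ∧ x i ≤ 1)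
    (hP : (C * Matrix.diagonal x * C + ((1 : Matrix (Fin n) (Fin n) ℝ) - Matrix.diagonal x)).PosDef) :
    ∃ (K : ℝ) (d : Fin n → ℝ), 0 < K ∧ (∀ i, 0 ≤ d i ∧ d i ≤ 1) ∧
      ∀ ψ : ℝ, (Real.exp ψ • (C * Matrix.diagonal x * C) + 1 - Matrix.diagonal x).det
        = K * ∏ i, (d i * Real.exp ψ + (1 - d i)) := by
  set A := C * Matrix.diagonal x * C with hA_def
  set B := (1 : Matrix (Fin n) (Fin n) ℝ) - Matrix.diagonal x with hB_def
  have hA_psd : A.PosSemidef := by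
    have hD : (Matrix.diagonal x).PosSemidef := .diagonal (fun i => (hx i).1)
    have := hD.conjTranspose_mul_mul_same C
    rwa [hC.1] at this
  have hB_psd : B.PosSemidef := by
    have : B = Matrix.diagonal (fun i => 1 - x i) := by
      rw [hB_def, ← Matrix.diagonal_one, Matrix.diagonal_sub]
    rw [this]
    exact Matrix.posSemidef_diagonal_iff.mpr (fun i => by simp; linarith [(hx i).2])
  have hPsd := hP.posSemidef
  obtain ⟨R, hR_psd, hRR⟩ : ∃ R : Matrix (Fin n) (Fin n) ℝ, R.PosSemidef ∧ R * R = A + B := by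
    open scoped MatrixOrder in
    exact ⟨CFC.sqrt (A + B), (CFC.sqrt_nonneg _).posSemidef, CFC.sqrt_mul_sqrt_self _ hPsd.nonneg⟩
  have hdetP : 0 < (A + B).det := hP.det_pos
  have hdetR : R.det ≠ 0 := by
    intro h
    rw [← hRR, Matrix.det_mul, h, mul_zero] at hdetP
    exact lt_irrefl _ hdetP
  have hRinv : R * R⁻¹ = 1 := Matrix.mul_nonsing_inv R (isUnit_iff_ne_zero.mpr hdetR)
  have hRinv' : R⁻¹ * R = 1 := Matrix.nonsing_inv_mul R (isUnit_iff_ne_zero.mpr hdetR)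
  have hRih : (R⁻¹)ᴴ = R⁻¹ := by rw [Matrix.conjTranspose_nonsing_inv, hR_psd.1]
  set H := R⁻¹ * A * R⁻¹ with hH_def
  have hH_psd : H.PosSemidef := by
    have := hA_psd.mul_mul_conjTranspose_same R⁻¹
    rwa [hRih] at this
  have hRHR : R * H * R = A := by
    rw [hH_def]
    calc R * (R⁻¹ * A * R⁻¹) * R = (R * R⁻¹) * A * (R⁻¹ * R) := by
          simp only [Matrix.mul_assoc]
      _ = A := by rw [hRinv, hRinv', Matrix.one_mul, Matrix.mul_one]
  have h1mH : ((1 : Matrix (Fin n) (Fin n) ℝ) - H).PosSemidef := by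
    have hB' : R⁻¹ * B * R⁻¹ = 1 - H := by
      have h2 : R⁻¹ * (A + B) * R⁻¹ = 1 := by
        rw [← hRR]
        calc R⁻¹ * (R * R) * R⁻¹ = (R⁻¹ * R) * (R * R⁻¹) := by simp only [Matrix.mul_assoc]
          _ = 1 := by rw [hRinv, hRinv', Matrix.one_mul]
      have : R⁻¹ * (A + B) * R⁻¹ = H + R⁻¹ * B * R⁻¹ := by
        rw [hH_def]; noncomm_ring
      rw [this] at h2
      linear_combination (norm := noncomm_ring) h2
    rw [← hB']
    have := hB_psd.mul_mul_conjTranspose_same R⁻¹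
    rwa [hRih] at this
  set V := (hH_psd.1.eigenvectorUnitary : Matrix (Fin n) (Fin n) ℝ) with hV_def
  set d := hH_psd.1.eigenvalues with hd_def
  have hspec : H = V * Matrix.diagonal d * star V := by
    have := hH_psd.1.spectral_theorem
    simpa using this
  have hVV : V * star V = 1 := (Matrix.mem_unitaryGroup_iff).mp hH_psd.1.eigenvectorUnitary.2
  have hVV' : star V * V = 1 := (Matrix.mem_unitaryGroup_iff').mp hH_psd.1.eigenvectorUnitary.2
  have hd0 : ∀ i, 0 ≤ d i := hH_psd.eigenvalues_nonneg
  have hd1 : ∀ i, d i ≤ 1 := by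
    intro i
    have hdiagH : star V * H * V = Matrix.diagonal d := by
      rw [hspec]
      calc star V * (V * Matrix.diagonal d * star V) * V = (star V * V) * Matrix.diagonal d * (star V * V) := by
            simp only [Matrix.mul_assoc]
        _ = Matrix.diagonal d := by rw [hVV', Matrix.one_mul, Matrix.mul_one]
    have hconj : (star V * (1 - H) * V).PosSemidef := by
      have := h1mH.conjTranspose_mul_mul_same V
      rwa [Matrix.star_eq_conjTranspose]
    have heq : star V * (1 - H) * V = Matrix.diagonal (fun j => 1 - d j) := by
      have : star V * ((1:Matrix (Fin n) (Fin n) ℝ) - H) * V = star V * V - star V * H * V := by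
        noncomm_ring
      rw [this, hVV', hdiagH, ← Matrix.diagonal_one, Matrix.diagonal_sub]
    rw [heq] at hconj
    have := Matrix.posSemidef_diagonal_iff.mp hconj i
    linarith
  refine ⟨(A + B).det, d, hdetP, fun i => ⟨hd0 i, hd1 i⟩, ?_⟩
  intro ψ
  set t := Real.exp ψ with ht_def
  have hM : t • A + 1 - Matrix.diagonal x = R * (t • H + (1 - H)) * R := by
    have h1 : R * (t • H) * R = t • A := by
      rw [Matrix.mul_smul, Matrix.smul_mul, hRHR]
    have h2 : R * ((1:Matrix (Fin n) (Fin n) ℝ) - H) * R = B := by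
      have : R * ((1:Matrix (Fin n) (Fin n) ℝ) - H) * R = R * R - R * H * R := by noncomm_ring
      rw [this, hRR, hRHR]
      abel
    calc t • A + 1 - Matrix.diagonal x = t • A + B := by rw [hB_def]; abel
      _ = R * (t • H) * R + R * (1 - H) * R := by rw [h1, h2]
      _ = R * (t • H + (1 - H)) * R := by noncomm_ring
  have hinner : t • H + (1 - H) = V * Matrix.diagonal (fun i => d i * t + (1 - d i)) * star V := by
    have h1 : (1 : Matrix (Fin n) (Fin n) ℝ) = V * 1 * star V := by rw [Matrix.mul_one, hVV]
    calc t • H + (1 - H)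
        = t • (V * Matrix.diagonal d * star V) + (V * 1 * star V - V * Matrix.diagonal d * star V) := by
          rw [← hspec, ← h1]
      _ = V * (t • Matrix.diagonal d + (1 - Matrix.diagonal d)) * star V := by
          simp only [Matrix.mul_add, Matrix.add_mul, Matrix.mul_sub, Matrix.sub_mul,
            Matrix.mul_smul, Matrix.smul_mul]
      _ = V * Matrix.diagonal (fun i => d i * t + (1 - d i)) * star V := by
          congr 2
          ext i j
          rcases eq_or_ne i j with h | h
          · subst h
            simp [Matrix.one_apply_eq]
            ring
          · simp [Matrix.diagonal_apply_ne _ h, Matrix.one_apply_ne h]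
  have hdetV : V.det * (star V).det = 1 := by
    rw [← Matrix.det_mul, hVV, Matrix.det_one]
  have hRRdet : R.det * R.det = (A+B).det := by rw [← Matrix.det_mul, hRR]
  rw [hM, hinner, Matrix.det_mul, Matrix.det_mul, Matrix.det_mul, Matrix.det_mul,
    Matrix.det_diagonal]
  linear_combination (R.det * R.det * (∏ i, (d i * t + (1 - d i)))) * hdetV
    + (∏ i, (d i * t + (1 - d i))) * hRRdet


lemma linx_bddAbove (n : ℕ) (C : Matrix (Fin n) (Fin n) ℝ) (s : ℕ) (ψ : ℝ) :
    BddAbove {r : ℝ | ∃ x : Fin n → ℝ, (∑ i, x i) = (s : ℝ) ∧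
      (∀ i, 0 ≤ x i ∧ x i ≤ 1) ∧
      r = Real.log
          (Real.exp ψ • (C * Matrix.diagonal x * C) + 1 - Matrix.diagonal x).det
        - s * ψ} := by
  set Kb := (∑ i, ∑ j, |C i j|) + 1 with hKb_def
  have hKb1 : (1:ℝ) ≤ Kb := by
    have : (0:ℝ) ≤ ∑ i, ∑ j, |C i j| :=
      Finset.sum_nonneg fun i _ => Finset.sum_nonneg fun j _ => abs_nonneg _
    simp only [hKb_def]; linarith
  have hCb : ∀ a b, |C a b| ≤ Kb := by
    intro a b
    have h1 : |C a b| ≤ ∑ j, |C a j| :=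
      Finset.single_le_sum (f := fun j => |C a j|) (fun j _ => abs_nonneg _) (Finset.mem_univ b)
    have h2 : (∑ j, |C a j|) ≤ ∑ i, ∑ j, |C i j| :=
      Finset.single_le_sum (f := fun i => ∑ j, |C i j|)
        (fun i _ => Finset.sum_nonneg fun j _ => abs_nonneg _) (Finset.mem_univ a)
    simp only [hKb_def]; linarith
  set Bψ := Real.exp ψ * (n * Kb^2) + 1 with hB_def
  have hBψ0 : 0 ≤ Bψ := by positivity
  set F := (Nat.factorial n : ℝ) * Bψ ^ n with hF_def
  have hF0 : 0 ≤ F := by positivity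
  refine ⟨Real.log (F + 1) - s * ψ, ?_⟩
  rintro r ⟨x, hsum, hx, rfl⟩
  have hentry : ∀ i j, |(Real.exp ψ • (C * Matrix.diagonal x * C) + 1 - Matrix.diagonal x) i j|
      ≤ Bψ := by
    intro i j
    have h1 : (Real.exp ψ • (C * Matrix.diagonal x * C) + 1 - Matrix.diagonal x) i j
        = Real.exp ψ * (∑ k, C i k * x k * C k j)
          + ((1 : Matrix (Fin n) (Fin n) ℝ) i j - Matrix.diagonal x i j) := by
      have hmm : (C * Matrix.diagonal x * C) i j = ∑ k, C i k * x k * C k j := by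
        rw [Matrix.mul_apply]
        exact Finset.sum_congr rfl fun k _ => by rw [Matrix.mul_diagonal]
      simp only [Matrix.sub_apply, Matrix.add_apply, Matrix.smul_apply, smul_eq_mul, hmm]
      ring
    rw [h1]
    have h2 : |∑ k, C i k * x k * C k j| ≤ n * Kb^2 := by
      calc |∑ k, C i k * x k * C k j| ≤ ∑ k, |C i k * x k * C k j| :=
            Finset.abs_sum_le_sum_abs _ _
        _ ≤ ∑ _k : Fin n, Kb^2 := by
            apply Finset.sum_le_sum
            intro k _
            rw [abs_mul, abs_mul]
            have hxk : |x k| ≤ 1 := abs_le.mpr ⟨by linarith [(hx k).1], (hx k).2⟩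
            calc |C i k| * |x k| * |C k j| ≤ Kb * 1 * Kb := by
                  apply mul_le_mul
                  · apply mul_le_mul (hCb i k) hxk (abs_nonneg _) (by linarith)
                  · exact hCb k j
                  · exact abs_nonneg _
                  · positivity
              _ = Kb^2 := by ring
        _ = n * Kb^2 := by rw [Finset.sum_const, Finset.card_univ, Fintype.card_fin,
              nsmul_eq_mul]
    have h3 : |(1 : Matrix (Fin n) (Fin n) ℝ) i j - Matrix.diagonal x i j| ≤ 1 := by
      rcases eq_or_ne i j with h | h
      · subst h
        rw [Matrix.one_apply_eq, Matrix.diagonal_apply_eq]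
        rw [abs_le]
        constructor <;> [linarith [(hx i).2]; linarith [(hx i).1]]
      · rw [Matrix.one_apply_ne h, Matrix.diagonal_apply_ne _ h]
        norm_num
    calc |Real.exp ψ * (∑ k, C i k * x k * C k j)
          + ((1 : Matrix (Fin n) (Fin n) ℝ) i j - Matrix.diagonal x i j)|
        ≤ |Real.exp ψ * (∑ k, C i k * x k * C k j)|
          + |(1 : Matrix (Fin n) (Fin n) ℝ) i j - Matrix.diagonal x i j| := abs_add_le _ _
      _ ≤ Real.exp ψ * (n * Kb^2) + 1 := by
          apply add_le_add _ h3
          rw [abs_mul, abs_of_pos (Real.exp_pos ψ)]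
          exact mul_le_mul_of_nonneg_left h2 (Real.exp_pos ψ).le
  have hdet : |(Real.exp ψ • (C * Matrix.diagonal x * C) + 1 - Matrix.diagonal x).det| ≤ F := by
    have := Matrix.det_le (A := Real.exp ψ • (C * Matrix.diagonal x * C) + 1 - Matrix.diagonal x)
      (abv := AbsoluteValue.abs) (x := Bψ) (fun i j => hentry i j)
    simpa [hF_def, nsmul_eq_mul] using this
  have hlog : Real.log (Real.exp ψ • (C * Matrix.diagonal x * C) + 1 - Matrix.diagonal x).det
      ≤ Real.log (F + 1) := by
    rw [← Real.log_abs]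
    rcases eq_or_lt_of_le
      (abs_nonneg ((Real.exp ψ • (C * Matrix.diagonal x * C) + 1 - Matrix.diagonal x).det))
      with h | h
    · rw [← h, Real.log_zero]
      exact Real.log_nonneg (by linarith)
    · exact Real.log_le_log h (by linarith)
  linarith


lemma conv_fixed {n : ℕ} {C : Matrix (Fin n) (Fin n) ℝ} (hC : C.PosDef) (s : ℕ)
    {x : Fin n → ℝ} (hx : ∀ i, 0 ≤ x i ∧ x i ≤ 1) :
    ConvexOn ℝ Set.univ (fun ψ : ℝ =>
      Real.log (Real.exp ψ • (C * Matrix.diagonal x * C) + 1 - Matrix.diagonal x).det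
        - s * ψ) := by
  obtain ⟨K, d, hK, hd, hdet⟩ := linx_decomp hC hx (posdef_P hC hx)
  have hfac : ∀ (ψ : ℝ) (i : Fin n), 0 < d i * Real.exp ψ + (1 - d i) := by
    intro ψ i
    rcases eq_or_lt_of_le (hd i).1 with h | h
    · rw [← h]; norm_num
    · have h1 : 0 < d i * Real.exp ψ := mul_pos h (Real.exp_pos ψ)
      have h2 : 0 ≤ 1 - d i := by linarith [(hd i).2]
      linarith
  have heq : (fun ψ : ℝ =>
      Real.log (Real.exp ψ • (C * Matrix.diagonal x * C) + 1 - Matrix.diagonal x).det - s * ψ)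
      = fun ψ : ℝ => (Real.log K + ∑ i, Real.log (d i * Real.exp ψ + (1 - d i)))
        + (-(s:ℝ)) * ψ := by
    funext ψ
    rw [hdet ψ]
    have hprodpos : 0 < ∏ i, (d i * Real.exp ψ + (1 - d i)) :=
      Finset.prod_pos fun i _ => hfac ψ i
    rw [Real.log_mul hK.ne' hprodpos.ne',
      Real.log_prod (fun i _ => (hfac ψ i).ne')]
    ring
  rw [heq]
  apply ConvexOn.add _ (convexOn_lin (-(s:ℝ)))
  apply ConvexOn.add (convexOn_const _ convex_univ)
  apply convexOn_finset_sum
  intro i _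
  exact conv_log_aexp (d i) (1 - d i) (hd i).1 (by linarith [(hd i).2]) (by norm_num)

lemma linx_nonempty (n : ℕ) (C : Matrix (Fin n) (Fin n) ℝ) (s : ℕ) (hs2 : s ≤ n) (ψ : ℝ) :
    {r : ℝ | ∃ x : Fin n → ℝ, (∑ i, x i) = (s : ℝ) ∧
      (∀ i, 0 ≤ x i ∧ x i ≤ 1) ∧
      r = Real.log
          (Real.exp ψ • (C * Matrix.diagonal x * C) + 1 - Matrix.diagonal x).det
        - s * ψ}.Nonempty := by
  refine ⟨_, ⟨fun i => if (i : ℕ) < s then (1:ℝ) else 0, sum_indicator_lt n s hs2, ?_, rfl⟩⟩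
  intro i
  by_cases h : (i : ℕ) < s <;> simp [h]


/-- The optimal linx bound, as a function of `ψ = log γ`,
`ψ ↦ sup { log det(e^ψ C diag(x) C + I - diag(x)) - s ψ : eᵀx = s, 0 ≤ x ≤ e }`,
is convex on `ℝ`; moreover, for each fixed `x` with `0 ≤ x ≤ e`, the function
`ψ ↦ log det(e^ψ C diag(x) C + I - diag(x)) - s ψ` is convex on `ℝ`. -/
theorem stmt_19 (n : ℕ) (C : Matrix (Fin n) (Fin n) ℝ) (hC : C.PosDef)
    (s : ℕ) (hs1 : 1 ≤ s) (hs2 : s ≤ n) :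
    ConvexOn ℝ Set.univ (fun ψ : ℝ =>
      sSup {r : ℝ | ∃ x : Fin n → ℝ, (∑ i, x i) = (s : ℝ) ∧
        (∀ i, 0 ≤ x i ∧ x i ≤ 1) ∧
        r = Real.log
            (Real.exp ψ • (C * Matrix.diagonal x * C) + 1 - Matrix.diagonal x).det
          - s * ψ})
    ∧ ∀ x : Fin n → ℝ, (∀ i, 0 ≤ x i ∧ x i ≤ 1) →
        ConvexOn ℝ Set.univ (fun ψ : ℝ =>
          Real.log
            (Real.exp ψ • (C * Matrix.diagonal x * C) + 1 - Matrix.diagonal x).det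
          - s * ψ) := by
  constructor
  · refine ⟨convex_univ, ?_⟩
    intro ψ1 _ ψ2 _ a b ha hb hab
    simp only [smul_eq_mul]
    apply csSup_le (linx_nonempty n C s hs2 _)
    rintro r ⟨x, hsum, hx, rfl⟩
    have hconv := conv_fixed hC s hx
    have h1 := hconv.2 (Set.mem_univ ψ1) (Set.mem_univ ψ2) ha hb hab
    simp only [smul_eq_mul] at h1
    have h2 : Real.log
        (Real.exp ψ1 • (C * Matrix.diagonal x * C) + 1 - Matrix.diagonal x).det - s * ψ1
        ≤ sSup {r : ℝ | ∃ x : Fin n → ℝ, (∑ i, x i) = (s : ℝ) ∧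
          (∀ i, 0 ≤ x i ∧ x i ≤ 1) ∧
          r = Real.log
              (Real.exp ψ1 • (C * Matrix.diagonal x * C) + 1 - Matrix.diagonal x).det
            - s * ψ1} :=
      le_csSup (linx_bddAbove n C s ψ1) ⟨x, hsum, hx, rfl⟩
    have h3 : Real.log
        (Real.exp ψ2 • (C * Matrix.diagonal x * C) + 1 - Matrix.diagonal x).det - s * ψ2
        ≤ sSup {r : ℝ | ∃ x : Fin n → ℝ, (∑ i, x i) = (s : ℝ) ∧
          (∀ i, 0 ≤ x i ∧ x i ≤ 1) ∧
          r = Real.log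
              (Real.exp ψ2 • (C * Matrix.diagonal x * C) + 1 - Matrix.diagonal x).det
            - s * ψ2} :=
      le_csSup (linx_bddAbove n C s ψ2) ⟨x, hsum, hx, rfl⟩
    exact h1.trans
      (add_le_add (mul_le_mul_of_nonneg_left h2 ha) (mul_le_mul_of_nonneg_left h3 hb))
  · intro x hx
    exact conv_fixed hC s hx
end
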